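/- arXiv:1912.03765 — 7 statements merged into one kernel-verified Lean document; each statement's English description precedes it below -/
import Mathlib

section
/- For every sequence (m_n) of positive integers and every δ with 0 < δ < 1, there exists a sequence (λ_n) of points of the open unit disk 𝔻 such that inf_{z∈𝔻} sup_n ∏_{k≠n} ρ(z, λ_k)^{m_k} ≥ δ. -/
open scoped BigOperators
open Metric Finset

noncomputable def blaschke (τ z : ℂ) : ℂ := (τ - z) / (1 - (starRingEnd ℂ) τ * z)

noncomputable def pseudoHyp (z w : ℂ) : ℝ :=
  ‖z - w‖ / ‖1 - (starRingEnd ℂ) z * w‖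

noncomputable def prodExcept (a : ℕ → ℝ) (n : ℕ) : ℝ :=
  ⨅ N : ℕ, ∏ k ∈ (Finset.range N).erase n, a k

def HinfOn (f : ℂ → ℂ) : Prop :=
  DifferentiableOn ℂ f (Metric.ball 0 1) ∧
    ∃ C : ℝ, ∀ z ∈ Metric.ball (0 : ℂ) 1, ‖f z‖ ≤ C

noncomputable def matApply {d : ℕ} (f : ℂ → ℂ) (M : Matrix (Fin d) (Fin d) ℂ) :
    Matrix (Fin d) (Fin d) ℂ :=
  ∑' k : ℕ, (iteratedDeriv k f 0 / (Nat.factorial k : ℂ)) • M ^ k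

noncomputable def matBlaschke {d : ℕ} (M : Matrix (Fin d) (Fin d) ℂ) (z : ℂ) : ℂ :=
  ((minpoly ℂ M).roots.map (fun μ => blaschke μ z)).prod

noncomputable def epsSeq (m : ℕ → ℕ) (η : ℝ) : ℕ → ℝ
  | 0 => 1/2
  | (k+1) => epsSeq m η k * η ^ 2 / ((m k : ℝ) * (m (k+1) : ℝ) * 2 ^ (2 * k + 1))

lemma normSq_id (z w : ℂ) :
    Complex.normSq (1 - (starRingEnd ℂ) z * w) =
      Complex.normSq (z - w) + (1 - Complex.normSq z) * (1 - Complex.normSq w) := by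
  simp [Complex.normSq_apply, Complex.sub_re, Complex.sub_im, Complex.mul_re, Complex.mul_im,
    Complex.one_re, Complex.one_im]
  ring

lemma one_sub_sum_le_prod (s : Finset ℕ) (f b : ℕ → ℝ)
    (hb0 : ∀ k ∈ s, 0 ≤ b k) (hb1 : ∀ k ∈ s, b k ≤ 1)
    (hf : ∀ k ∈ s, 1 - b k ≤ f k) :
    1 - ∑ k ∈ s, b k ≤ ∏ k ∈ s, f k := by
  induction s using Finset.cons_induction with
  | empty => simp
  | cons a s ha ih =>
    rw [Finset.sum_cons, Finset.prod_cons]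
    have h1 := ih (fun k hk => hb0 k (Finset.mem_cons_of_mem hk))
      (fun k hk => hb1 k (Finset.mem_cons_of_mem hk))
      (fun k hk => hf k (Finset.mem_cons_of_mem hk))
    have hsum : 0 ≤ ∑ k ∈ s, b k :=
      Finset.sum_nonneg fun k hk => hb0 k (Finset.mem_cons_of_mem hk)
    have hfa : 1 - b a ≤ f a := hf a (Finset.mem_cons_self a s)
    have hba0 : 0 ≤ b a := hb0 a (Finset.mem_cons_self a s)
    have hba1 : b a ≤ 1 := hb1 a (Finset.mem_cons_self a s)
    have hprod0 : 0 ≤ ∏ k ∈ s, f k :=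
      Finset.prod_nonneg fun k hk => le_trans (by linarith [hb1 k (Finset.mem_cons_of_mem hk)])
        (hf k (Finset.mem_cons_of_mem hk))
    nlinarith [mul_le_mul_of_nonneg_left h1 (by linarith : (0:ℝ) ≤ 1 - b a),
      mul_le_mul_of_nonneg_right hfa hprod0, mul_nonneg hba0 hsum]

lemma pseudo_est (z : ℂ) (hz : ‖z‖ < 1) (r : ℝ) (hr0 : 0 ≤ r) (hr1 : r < 1) :
    0 ≤ pseudoHyp z r ∧ pseudoHyp z r ≤ 1 ∧
    (1 - pseudoHyp z r ^ 2) * (1 - r) ≤ 4 * (1 - ‖z‖) ∧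
    (1 - pseudoHyp z r ^ 2) * (1 - ‖z‖) ≤ 4 * (1 - r) := by
  set w : ℂ := (r : ℂ) with hw
  have habsw : ‖w‖ = r := by rw [hw, Complex.norm_real, Real.norm_eq_abs, abs_of_nonneg hr0]
  set A := ‖z - w‖ with hA
  set B := ‖1 - (starRingEnd ℂ) z * w‖ with hB
  have hz0 : 0 ≤ ‖z‖ := norm_nonneg z
  have hA0 : 0 ≤ A := norm_nonneg _
  have hB0 : 0 ≤ B := norm_nonneg _
  have hid : B ^ 2 = A ^ 2 + (1 - ‖z‖ ^ 2) * (1 - r ^ 2) := by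
    rw [hA, hB, Complex.sq_norm, Complex.sq_norm, normSq_id, ← Complex.sq_norm z, hw,
      Complex.normSq_ofReal]
    ring
  have hBge : 1 - ‖z‖ * r ≤ B := by
    have := norm_sub_norm_le (1 : ℂ) ((starRingEnd ℂ) z * w)
    simpa [hB, norm_mul, Complex.norm_conj, habsw] using this
  have hBz : 1 - ‖z‖ ≤ B := by nlinarith
  have hBr : 1 - r ≤ B := by nlinarith
  have hBpos : 0 < B := by nlinarith
  have hpos1 : 0 ≤ 1 - ‖z‖ ^ 2 := by nlinarith
  have hpos2 : 0 ≤ 1 - r ^ 2 := by nlinarith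
  have hA2B2 : A ^ 2 ≤ B ^ 2 := by nlinarith [mul_nonneg hpos1 hpos2]
  have hAB : A ≤ B := by nlinarith [sq_nonneg (A - B), sq_nonneg (A + B)]
  have hρ : pseudoHyp z w = A / B := rfl
  have hρ0 : 0 ≤ pseudoHyp z w := div_nonneg hA0 hB0
  have hρ1 : pseudoHyp z w ≤ 1 := by rw [hρ]; exact div_le_one_of_le₀ hAB hB0
  have hBne : B ≠ 0 := ne_of_gt hBpos
  have hkey : (1 - pseudoHyp z w ^ 2) * B ^ 2 = (1 - ‖z‖ ^ 2) * (1 - r ^ 2) := by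
    rw [hρ, div_pow]
    have : (1 - A ^ 2 / B ^ 2) * B ^ 2 = B ^ 2 - A ^ 2 := by field_simp
    rw [this, hid]; ring
  have hX0 : 0 ≤ 1 - pseudoHyp z w ^ 2 := by nlinarith [hρ0, hρ1]
  set X := 1 - pseudoHyp z w ^ 2 with hXdef
  have hP : 0 ≤ (1 - ‖z‖) * (1 - r) :=
    mul_nonneg (by linarith) (by linarith)
  have hQ : (1 + ‖z‖) * (1 + r) ≤ 4 := by nlinarith
  have h3 : (1 - ‖z‖ ^ 2) * (1 - r ^ 2) ≤ 4 * ((1 - ‖z‖) * (1 - r)) := by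
    nlinarith [mul_le_mul_of_nonneg_left hQ hP]
  refine ⟨hρ0, hρ1, ?_, ?_⟩
  · have h1 : X * (1 - r) ^ 2 ≤ X * B ^ 2 :=
      mul_le_mul_of_nonneg_left (pow_le_pow_left₀ (by linarith) hBr 2) hX0
    rw [hkey] at h1
    have h5 : X * (1 - r) ^ 2 ≤ 4 * ((1 - ‖z‖) * (1 - r)) := h1.trans h3
    have hrpos : (0:ℝ) < 1 - r := by linarith
    have h4 : X * (1 - r) * (1 - r) ≤ 4 * (1 - ‖z‖) * (1 - r) := by linarith [h5]
    exact le_of_mul_le_mul_right h4 hrpos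
  · have h1 : X * (1 - ‖z‖) ^ 2 ≤ X * B ^ 2 :=
      mul_le_mul_of_nonneg_left (pow_le_pow_left₀ (by linarith) hBz 2) hX0
    rw [hkey] at h1
    have h5 : X * (1 - ‖z‖) ^ 2 ≤ 4 * ((1 - ‖z‖) * (1 - r)) := h1.trans h3
    have hzpos : (0:ℝ) < 1 - ‖z‖ := by linarith
    have h4 : X * (1 - ‖z‖) * (1 - ‖z‖)
        ≤ 4 * (1 - r) * (1 - ‖z‖) := by linarith [h5]
    exact le_of_mul_le_mul_right h4 hzpos

lemma epsSeq_pos (m : ℕ → ℕ) (hm : ∀ n, 0 < m n) {η : ℝ} (hη : 0 < η) :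
    ∀ k, 0 < epsSeq m η k := by
  intro k
  induction k with
  | zero => norm_num [epsSeq]
  | succ k ih =>
    rw [epsSeq]
    apply div_pos (mul_pos ih (pow_pos hη 2))
    have h1 : (0:ℝ) < (m k : ℝ) := Nat.cast_pos.2 (hm k)
    have h2 : (0:ℝ) < (m (k+1) : ℝ) := Nat.cast_pos.2 (hm (k+1))
    positivity

lemma epsSeq_le_half (m : ℕ → ℕ) (hm : ∀ n, 0 < m n) {η : ℝ} (hη : 0 < η) (hη1 : η ≤ 1) :
    ∀ k, epsSeq m η k ≤ 1/2 := by
  intro k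
  induction k with
  | zero => norm_num [epsSeq]
  | succ k ih =>
    rw [epsSeq]
    have hpos := epsSeq_pos m hm hη k
    have h1 : (1:ℝ) ≤ (m k : ℝ) := by exact_mod_cast hm k
    have h2 : (1:ℝ) ≤ (m (k+1) : ℝ) := by exact_mod_cast hm (k+1)
    have h3 : (1:ℝ) ≤ (2:ℝ) ^ (2 * k + 1) := one_le_pow₀ (by norm_num)
    have h4 : (1:ℝ) ≤ (m k : ℝ) * (m (k+1) : ℝ) * 2 ^ (2 * k + 1) := by
      nlinarith [mul_le_mul h1 h2 (by norm_num : (0:ℝ) ≤ 1) (by linarith : (0:ℝ) ≤ (m k:ℝ))]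
    calc epsSeq m η k * η ^ 2 / ((m k : ℝ) * (m (k+1) : ℝ) * 2 ^ (2 * k + 1))
        ≤ epsSeq m η k * η ^ 2 / 1 := by
          apply div_le_div_of_nonneg_left (by positivity) (by norm_num) h4
      _ = epsSeq m η k * η ^ 2 := by ring
      _ ≤ epsSeq m η k * 1 := by nlinarith [sq_nonneg η, mul_le_one₀ hη1 hη.le hη1]
      _ ≤ 1/2 := by linarith

lemma S_succ (m : ℕ → ℕ) (hm : ∀ n, 0 < m n) {η : ℝ} (hη : 0 < η) (k : ℕ) :
    (m (k+1) : ℝ) * epsSeq m η (k+1) * 2 ^ (k+1) / η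
      = η * (1/2) ^ k * epsSeq m η k / (m k : ℝ) := by
  have h1 : ((m k : ℝ)) ≠ 0 := Nat.cast_ne_zero.2 (hm k).ne'
  have h2 : ((m (k+1) : ℝ)) ≠ 0 := Nat.cast_ne_zero.2 (hm (k+1)).ne'
  have hηne : η ≠ 0 := ne_of_gt hη
  have e1 : (2:ℝ) ^ (2 * k + 1) = 2 * (2 ^ k * 2 ^ k) := by
    rw [pow_succ, two_mul, pow_add]; ring
  rw [epsSeq, e1, one_div, inv_pow]
  field_simp
  ring

lemma geom_half_eq (N : ℕ) : ∑ k ∈ range N, ((1:ℝ)/2)^k = 2 - 2 * (1/2)^N := by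
  induction N with
  | zero => norm_num
  | succ N ih => rw [Finset.sum_range_succ, ih, pow_succ]; ring

lemma geom_half_le (N : ℕ) : ∑ k ∈ range N, ((1:ℝ)/2)^k ≤ 2 := by
  rw [geom_half_eq]
  have : (0:ℝ) ≤ (1/2)^N := by positivity
  linarith


/-- For every sequence of multiplicities and every `0 < δ < 1` there is a sequence in the
unit disk which is uniformly strongly separated with constant at least `δ`. -/
theorem exists_uniformly_strongly_separated
    (m : ℕ → ℕ) (hm : ∀ n, 0 < m n) (δ : ℝ) (hδ0 : 0 < δ) (hδ1 : δ < 1) :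
    ∃ l : ℕ → ℂ, (∀ n, l n ∈ Metric.ball (0 : ℂ) 1) ∧
      ∀ z ∈ Metric.ball (0 : ℂ) 1,
        δ ≤ ⨆ n : ℕ, prodExcept (fun k => pseudoHyp z (l k) ^ m k) n := by
  set η : ℝ := (1 - δ) / 8 with hηdef
  have hη0 : 0 < η := by rw [hηdef]; linarith
  have hη8 : η ≤ 1/8 := by rw [hηdef]; linarith
  have hη1 : η ≤ 1 := by linarith
  set ε : ℕ → ℝ := epsSeq m η with hεdef
  have hεpos : ∀ k, 0 < ε k := epsSeq_pos m hm hη0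
  have hεhalf : ∀ k, ε k ≤ 1/2 := epsSeq_le_half m hm hη0 hη1
  set l : ℕ → ℂ := fun n => ((1 - ε n : ℝ) : ℂ) with hldef
  have hmem : ∀ n, l n ∈ Metric.ball (0 : ℂ) 1 := by
    intro n
    rw [mem_ball, dist_zero_right, hldef]
    simp only [Complex.norm_real, Real.norm_eq_abs]
    rw [abs_of_nonneg (by linarith [hεhalf n, hεpos n])]
    linarith [hεpos n]
  refine ⟨l, hmem, ?_⟩
  intro z hz
  have hza : ‖z‖ < 1 := by
    rw [mem_ball, dist_zero_right] at hz; exact hz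
  set t : ℝ := 1 - ‖z‖ with htdef
  have ht : 0 < t := by rw [htdef]; linarith
  set S : ℕ → ℝ := fun k => (m k : ℝ) * ε k * 2 ^ k / η with hSdef
  have hmcast : ∀ k, (1:ℝ) ≤ (m k : ℝ) := fun k => by exact_mod_cast hm k
  have hmpos : ∀ k, (0:ℝ) < (m k : ℝ) := fun k => by linarith [hmcast k]
  have hS : ∀ k, S (k+1) = η * (1/2) ^ k * ε k / (m k : ℝ) := fun k => S_succ m hm hη0 k
  have hS_le_eps : ∀ k, S (k+1) ≤ ε k := by
    intro k
    rw [hS k, div_le_iff₀ (hmpos k)]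
    have hhalf : ((1:ℝ)/2) ^ k ≤ 1 := pow_le_one₀ (by norm_num) (by norm_num)
    have ha : η * (1/2) ^ k ≤ 1 := mul_le_one₀ hη1 (by positivity) hhalf
    nlinarith [mul_le_mul_of_nonneg_right ha (hεpos k).le,
      mul_le_mul_of_nonneg_left (hmcast k) (hεpos k).le]
  have heps_le_S : ∀ k, ε k ≤ S k := by
    intro k
    rw [hSdef]
    rw [le_div_iff₀ hη0]
    have hp : (1:ℝ) ≤ 2 ^ k := one_le_pow₀ (by norm_num)
    have hc : (1:ℝ) ≤ (m k : ℝ) * 2 ^ k := by nlinarith [hmcast k]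
    nlinarith [mul_le_mul_of_nonneg_left hc (hεpos k).le, hεpos k]
  have hSdec : ∀ k, S (k+1) ≤ S k := fun k => (hS_le_eps k).trans (heps_le_S k)
  have hSanti : Antitone S := antitone_nat_of_succ_le hSdec
  have hex : ∃ k, S (k+1) < t := by
    obtain ⟨k, hk⟩ := exists_pow_lt_of_lt_one ht (by norm_num : (1:ℝ)/2 < 1)
    refine ⟨k, lt_of_le_of_lt ?_ hk⟩
    rw [hS k, div_le_iff₀ (hmpos k)]
    have h1 : η * ε k ≤ 1 := by nlinarith [hεhalf k, hεpos k]
    have h2 : (0:ℝ) ≤ (1/2:ℝ) ^ k := by positivity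
    nlinarith [mul_le_mul_of_nonneg_left (hmcast k) h2, h1, h2]
  set n : ℕ := Nat.find hex with hndef
  have hn : S (n+1) < t := Nat.find_spec hex
  have hmin : ∀ k, k < n → t ≤ S (k+1) := fun k hk => not_lt.1 (Nat.find_min hex hk)
  set b : ℕ → ℝ := fun k => 4 * η * (1/2) ^ k with hbdef
  have hb0 : ∀ k, 0 ≤ b k := fun k => by positivity
  have hb1 : ∀ k, b k ≤ 1 := by
    intro k
    have : ((1:ℝ)/2) ^ k ≤ 1 := pow_le_one₀ (by norm_num) (by norm_num)
    rw [hbdef]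
    nlinarith
  -- core estimate
  have hcore : ∀ k, k ≠ n → 1 - b k ≤ pseudoHyp z (l k) ^ m k := by
    intro k hk
    obtain ⟨hρ0, hρ1, hest1, hest2⟩ :=
      pseudo_est z hza (1 - ε k) (by linarith [hεhalf k]) (by linarith [hεpos k])
    set ρ : ℝ := pseudoHyp z ((1 - ε k : ℝ) : ℂ) with hρdef
    have he1 : (1:ℝ) - (1 - ε k) = ε k := by ring
    rw [he1] at hest1 hest2
    rw [← htdef] at hest1 hest2
    have hmb : (m k : ℝ) * (1 - ρ ^ 2) ≤ b k := by
      rcases lt_or_gt_of_ne hk with hlt | hgt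
      · -- k < n
        have h2 : t ≤ η * (1/2) ^ k * ε k / (m k : ℝ) := by
          rw [← hS k]; exact hmin k hlt
        have h3 : t * (m k : ℝ) ≤ η * (1/2) ^ k * ε k := by
          rwa [le_div_iff₀ (hmpos k)] at h2
        have h4 : (m k : ℝ) * (1 - ρ ^ 2) * ε k ≤ b k * ε k := by
          have h5 := mul_le_mul_of_nonneg_left hest1 (hmpos k).le
          rw [hbdef]
          nlinarith [h3, h5]
        exact le_of_mul_le_mul_right h4 (hεpos k)
      · -- k > n
        have h1 : S k < t := lt_of_le_of_lt (hSanti (Nat.succ_le_of_lt hgt)) hn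
        have h2 : (m k : ℝ) * ε k * 2 ^ k / η ≤ t := le_of_lt h1
        have h3 : (m k : ℝ) * ε k * 2 ^ k ≤ t * η := by
          rwa [div_le_iff₀ hη0] at h2
        have hpow : ((1:ℝ)/2) ^ k * 2 ^ k = 1 := by
          rw [one_div, inv_pow, inv_mul_cancel₀ (by positivity)]
        have h4 : (m k : ℝ) * (1 - ρ ^ 2) * (t * 2 ^ k) ≤ 4 * (t * η) := by
          have h5 := mul_le_mul_of_nonneg_left hest2
            (show (0:ℝ) ≤ (m k : ℝ) * 2 ^ k by positivity)
          nlinarith [h3, h5]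
        have h5 : (4 * η * (1/2) ^ k) * (t * 2 ^ k) = 4 * (t * η) := by
          linear_combination (4 * η * t) * hpow
        have h6 : (m k : ℝ) * (1 - ρ ^ 2) * (t * 2 ^ k) ≤ (4 * η * (1/2) ^ k) * (t * 2 ^ k) := by
          rw [h5]; exact h4
        have hpos : (0:ℝ) < t * 2 ^ k := mul_pos ht (by positivity)
        rw [hbdef]
        exact le_of_mul_le_mul_right h6 hpos
    have h7 : 1 + (m k : ℝ) * (ρ ^ 2 - 1) ≤ (ρ ^ 2) ^ (m k) := by
      have h := one_add_mul_le_pow (a := ρ ^ 2 - 1) (by nlinarith [sq_nonneg ρ]) (m k)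
      have e : (1:ℝ) + (ρ ^ 2 - 1) = ρ ^ 2 := by ring
      rwa [e] at h
    have h8 : (ρ ^ 2) ^ (m k) ≤ ρ ^ (m k) := by
      rw [← pow_mul]
      exact pow_le_pow_of_le_one hρ0 hρ1 (by omega)
    linarith [hmb, h7, h8]
  -- δ ≤ prodExcept at n
  have hnonneg : ∀ (j : ℕ) (N : ℕ),
      0 ≤ ∏ k ∈ (Finset.range N).erase j, pseudoHyp z (l k) ^ m k := by
    intro j N
    refine Finset.prod_nonneg fun k _ => pow_nonneg ?_ _
    exact div_nonneg (norm_nonneg _) (norm_nonneg _)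
  have hmain : δ ≤ prodExcept (fun k => pseudoHyp z (l k) ^ m k) n := by
    refine le_ciInf fun N => ?_
    have hprod := one_sub_sum_le_prod ((Finset.range N).erase n)
      (fun k => pseudoHyp z (l k) ^ m k) b
      (fun k _ => hb0 k) (fun k _ => hb1 k)
      (fun k hk => hcore k (Finset.ne_of_mem_erase hk))
    have hsum : ∑ k ∈ (Finset.range N).erase n, b k ≤ 8 * η := by
      calc ∑ k ∈ (Finset.range N).erase n, b k
          ≤ ∑ k ∈ Finset.range N, b k :=
            Finset.sum_le_sum_of_subset_of_nonneg (Finset.erase_subset n _)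
              (fun k _ _ => hb0 k)
        _ = 4 * η * ∑ k ∈ Finset.range N, ((1:ℝ)/2) ^ k := by
            simp only [hbdef]
            rw [Finset.mul_sum]
        _ ≤ 4 * η * 2 := by
            exact mul_le_mul_of_nonneg_left (geom_half_le N) (by positivity)
        _ = 8 * η := by ring
    have hδη : δ = 1 - 8 * η := by rw [hηdef]; ring
    calc δ = 1 - 8 * η := hδη
      _ ≤ 1 - ∑ k ∈ (Finset.range N).erase n, b k := by linarith
      _ ≤ ∏ k ∈ (Finset.range N).erase n, pseudoHyp z (l k) ^ m k := hprod
  refine hmain.trans (le_ciSup ?_ n)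
  refine ⟨1, ?_⟩
  rintro x ⟨j, rfl⟩
  have hle : prodExcept (fun k => pseudoHyp z (l k) ^ m k) j
      ≤ ∏ k ∈ (Finset.range 0).erase j, pseudoHyp z (l k) ^ m k := by
    exact ciInf_le ⟨0, by rintro y ⟨N, rfl⟩; exact hnonneg j N⟩ 0
  simpa using hle
end

section
/- Let (n_k) be a sequence of positive integers, let m_{k,j} (k ∈ ℕ, 1 ≤ j ≤ n_k) be positive integers, and let 0 < δ < 1. Then there exist points λ_{k,j} ∈ 𝔻 (k ∈ ℕ, 1 ≤ j ≤ n_k) such that, setting B_k := ∏_{j=1}^{n_k} b_{λ_{k,j}}^{m_{k,j}}, one has inf_{z∈𝔻} sup_k ∏_{l≠k} |B_l(z)| ≥ δ. -/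
open scoped BigOperators
open Metric Finset

/-- Lower bound for the modulus of a Blaschke factor with real center. -/
lemma blaschke_abs_lower (μ : ℝ) (hμ0 : 0 ≤ μ) (hμ1 : μ < 1) (z : ℂ) (hz : ‖z‖ < 1) :
    |μ - ‖z‖| / (1 - μ * ‖z‖) ≤ ‖blaschke (↑μ) z‖ := by
  set t := ‖z‖ with htdef
  have ht0 : 0 ≤ t := norm_nonneg z
  have hden : 0 < 1 - μ * t := by nlinarith
  have hmz : ‖(μ : ℂ) * z‖ < 1 := by
    rw [norm_mul, Complex.norm_real, Real.norm_eq_abs, abs_of_nonneg hμ0]; nlinarith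
  have hne : (1 : ℂ) - (μ : ℂ) * z ≠ 0 := by
    intro h
    have : (μ : ℂ) * z = 1 := by linear_combination -h
    rw [this] at hmz; simp at hmz
  have hB : 0 < ‖1 - (μ : ℂ) * z‖ := by
    exact norm_pos_iff.mpr hne
  have hrw : blaschke (↑μ) z = ((μ : ℂ) - z) / (1 - (μ : ℂ) * z) := by
    simp [blaschke, Complex.conj_ofReal]
  rw [hrw, norm_div, div_le_div_iff₀ hden hB]
  have key : (|μ - t| * ‖1 - (μ:ℂ) * z‖) ^ 2 ≤
      (‖(μ:ℂ) - z‖ * (1 - μ * t)) ^ 2 := by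
    have hx : z.re ≤ t := Complex.re_le_norm z
    have ht2 : t ^ 2 = z.re ^ 2 + z.im ^ 2 := by
      rw [htdef, Complex.sq_norm, Complex.normSq_apply]; ring
    rw [mul_pow, mul_pow, sq_abs, Complex.sq_norm, Complex.sq_norm,
      Complex.normSq_apply, Complex.normSq_apply]
    simp only [Complex.sub_re, Complex.sub_im, Complex.one_re, Complex.one_im,
      Complex.mul_re, Complex.mul_im, Complex.ofReal_re, Complex.ofReal_im]
    have hfac : ((μ - z.re) * (μ - z.re) + (0 - z.im) * (0 - z.im)) * (1 - μ * t) ^ 2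
        - (μ - t) ^ 2 * ((1 - (μ * z.re - 0 * z.im)) * (1 - (μ * z.re - 0 * z.im))
          + (0 - (μ * z.im + 0 * z.re)) * (0 - (μ * z.im + 0 * z.re)))
        = 2 * μ * (t - z.re) * (1 - μ ^ 2) * (1 - t ^ 2) := by
      linear_combination (((1 - μ * t) ^ 2 - μ ^ 2 * (μ - t) ^ 2)
        - 2*(1 - 2*μ*t + 2*μ^3*t - μ^4)) * ht2
    nlinarith [hfac, mul_nonneg (mul_nonneg (mul_nonneg hμ0 (sub_nonneg.2 hx))
      (by nlinarith : (0:ℝ) ≤ 1 - μ^2)) (by nlinarith : (0:ℝ) ≤ 1 - t^2)]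
  have h1 : 0 ≤ |μ - t| * ‖1 - (μ:ℂ) * z‖ :=
    mul_nonneg (abs_nonneg _) (norm_nonneg _)
  have h2 : 0 ≤ ‖(μ:ℂ) - z‖ * (1 - μ * t) :=
    mul_nonneg (norm_nonneg _) hden.le
  exact (pow_le_pow_iff_left₀ h1 h2 two_ne_zero).mp key

noncomputable def radii (s : ℕ → ℝ) : ℕ → ℝ
  | 0 => 0
  | l + 1 =>
      ((radii s l + s l) / (1 + s l * radii s l) + s (l + 1)) /
        (1 + s (l + 1) * ((radii s l + s l) / (1 + s l * radii s l)))

noncomputable def bdry (s : ℕ → ℝ) (l : ℕ) : ℝ :=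
  (radii s l + s l) / (1 + s l * radii s l)

lemma g_bounds {b σ : ℝ} (hb0 : 0 ≤ b) (hb1 : b < 1) (hσ0 : 0 < σ) (hσ1 : σ < 1) :
    b ≤ (b + σ) / (1 + σ * b) ∧ (b + σ) / (1 + σ * b) < 1 := by
  have hd : 0 < 1 + σ * b := by nlinarith
  constructor
  · rw [le_div_iff₀ hd]
    nlinarith [mul_nonneg hσ0.le (mul_nonneg (sub_nonneg.2 hb1.le) (by linarith : (0:ℝ) ≤ 1 + b))]
  · rw [div_lt_one hd]; nlinarith

lemma radii_bounds {s : ℕ → ℝ} (hs : ∀ l, 0 < s l ∧ s l < 1) (l : ℕ) :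
    0 ≤ radii s l ∧ radii s l < 1 := by
  induction l with
  | zero => simp [radii]
  | succ l ih =>
    have hb := g_bounds ih.1 ih.2 (hs l).1 (hs l).2
    have hb0 : 0 ≤ (radii s l + s l) / (1 + s l * radii s l) := ih.1.trans hb.1
    have hb2 := g_bounds hb0 hb.2 (hs (l+1)).1 (hs (l+1)).2
    exact ⟨hb0.trans hb2.1, by simpa [radii] using hb2.2⟩

lemma bdry_bounds {s : ℕ → ℝ} (hs : ∀ l, 0 < s l ∧ s l < 1) (l : ℕ) :
    radii s l ≤ bdry s l ∧ bdry s l < 1 :=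
  g_bounds (radii_bounds hs l).1 (radii_bounds hs l).2 (hs l).1 (hs l).2

lemma radii_succ_eq (s : ℕ → ℝ) (l : ℕ) :
    radii s (l + 1) = (bdry s l + s (l + 1)) / (1 + s (l + 1) * bdry s l) := rfl

lemma bdry_mono {s : ℕ → ℝ} (hs : ∀ l, 0 < s l ∧ s l < 1) :
    Monotone (bdry s) := by
  apply monotone_nat_of_le_succ
  intro l
  have h1 : 0 ≤ bdry s l := (radii_bounds hs l).1.trans (bdry_bounds hs l).1
  have h2 := g_bounds h1 (bdry_bounds hs l).2 (hs (l+1)).1 (hs (l+1)).2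
  calc bdry s l ≤ radii s (l+1) := by rw [radii_succ_eq]; exact h2.1
    _ ≤ bdry s (l+1) := (bdry_bounds hs (l+1)).1

lemma radii_key {s : ℕ → ℝ} (hs : ∀ l, 0 < s l ∧ s l < 1) (l : ℕ) :
    radii s (l + 1) - s (l + 1) = bdry s l * (1 - s (l + 1) * radii s (l + 1)) := by
  have h1 : 0 ≤ bdry s l := (radii_bounds hs l).1.trans (bdry_bounds hs l).1
  have hd : 0 < 1 + s (l+1) * bdry s l := by nlinarith [(hs (l+1)).1]
  have hinv : (1 + s (l+1) * bdry s l) * (1 + s (l+1) * bdry s l)⁻¹ = 1 := mul_inv_cancel₀ hd.ne'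
  rw [radii_succ_eq, div_eq_mul_inv]
  linear_combination (bdry s l + s (l+1)) * hinv

lemma radii_sep {s : ℕ → ℝ} (hs : ∀ l, 0 < s l ∧ s l < 1) {t : ℝ}
    {l j : ℕ} (hlj : l < j)
    (h1 : |radii s l - t| < s l * (1 - radii s l * t))
    (h2 : |radii s j - t| < s j * (1 - radii s j * t)) : False := by
  obtain ⟨j, rfl⟩ := Nat.exists_eq_succ_of_ne_zero (show j ≠ 0 by omega)
  -- t < bdry s l
  rw [abs_lt] at h1 h2
  have hμl := radii_bounds hs l
  have hμj := radii_bounds hs (j+1)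
  have hdl : 0 < 1 + s l * radii s l := by nlinarith [(hs l).1]
  have htl : t < bdry s l := by
    rw [bdry, lt_div_iff₀ hdl]; nlinarith [h1.2]
  have hsj : 0 < 1 - s (j+1) * radii s (j+1) := by
    nlinarith [(hs (j+1)).1, (hs (j+1)).2, hμj.1, hμj.2]
  have hkey := radii_key hs j
  have htj : bdry s j < t := by
    have : bdry s j * (1 - s (j+1) * radii s (j+1)) < t * (1 - s (j+1) * radii s (j+1)) := by
      rw [← hkey]; nlinarith [h2.1]
    exact lt_of_mul_lt_mul_right this hsj.le
  have : bdry s l ≤ bdry s j := bdry_mono hs (Nat.lt_succ_iff.mp hlj)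
  linarith

/-- For any sequence of finite Blaschke-product data there are points in the unit disk whose
associated finite Blaschke products are uniformly strongly separated with constant `δ`. -/
theorem exists_separated_finite_blaschke_products
    (nk : ℕ → ℕ) (hnk : ∀ k, 0 < nk k)
    (m : ∀ k : ℕ, Fin (nk k) → ℕ) (hm : ∀ k j, 0 < m k j)
    (δ : ℝ) (hδ0 : 0 < δ) (hδ1 : δ < 1) :
    ∃ l : ∀ k : ℕ, Fin (nk k) → ℂ,
      (∀ k j, l k j ∈ Metric.ball (0 : ℂ) 1) ∧
      ∀ z ∈ Metric.ball (0 : ℂ) 1,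
        δ ≤ ⨆ k : ℕ,
          prodExcept (fun i => ‖∏ j : Fin (nk i), blaschke (l i j) z ^ m i j‖) k := by
  set M : ℕ → ℕ := fun k => ∑ j : Fin (nk k), m k j with hMdef
  have hM1 : ∀ k, 0 < M k := fun k =>
    Finset.sum_pos (fun j _ => hm k j) ⟨⟨0, hnk k⟩, Finset.mem_univ _⟩
  set s : ℕ → ℝ := fun l => δ ^ ((1/2 : ℝ) ^ (l+1) / (M l : ℝ)) with hsdef
  have hs : ∀ l, 0 < s l ∧ s l < 1 := by
    intro l
    have he : 0 < (1/2:ℝ)^(l+1) / (M l : ℝ) :=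
      div_pos (by positivity) (Nat.cast_pos.2 (hM1 l))
    exact ⟨Real.rpow_pos_of_pos hδ0 _, Real.rpow_lt_one hδ0.le hδ1 he⟩
  have hspow : ∀ l, (s l) ^ (M l) = δ ^ ((1/2:ℝ) ^ (l+1)) := by
    intro l
    rw [hsdef]
    rw [← Real.rpow_natCast (δ ^ ((1/2 : ℝ) ^ (l+1) / (M l : ℝ))) (M l),
      ← Real.rpow_mul hδ0.le, div_mul_cancel₀]
    exact Nat.cast_ne_zero.2 (hM1 l).ne'
  set μ : ℕ → ℝ := radii s with hμdef
  have hμ : ∀ l, 0 ≤ μ l ∧ μ l < 1 := radii_bounds hs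
  refine ⟨fun k _ => ((μ k : ℝ) : ℂ), ?_, ?_⟩
  · intro k j
    rw [mem_ball_zero_iff, Complex.norm_real, Real.norm_eq_abs,
      abs_of_nonneg (hμ k).1]
    exact (hμ k).2
  intro z hz
  rw [mem_ball_zero_iff] at hz
  set t := ‖z‖ with htdef
  have ht0 : 0 ≤ t := norm_nonneg z
  set a : ℕ → ℝ := fun i => ‖∏ j : Fin (nk i), blaschke ((μ i : ℝ) : ℂ) z ^ m i j‖
    with hadef
  have ha0 : ∀ i, 0 ≤ a i := fun i => norm_nonneg _
  -- choose the exceptional index K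
  obtain ⟨K, hK⟩ : ∃ K : ℕ, ∀ i, i ≠ K → ¬ (|μ i - t| < s i * (1 - μ i * t)) := by
    by_cases hex : ∃ i, |μ i - t| < s i * (1 - μ i * t)
    · obtain ⟨K, hK⟩ := hex
      refine ⟨K, fun i hi hclose => ?_⟩
      rcases lt_or_gt_of_ne hi with h | h
      · exact radii_sep hs h hclose hK
      · exact radii_sep hs h hK hclose
    · push_neg at hex
      exact ⟨0, fun i _ => not_lt.2 (hex i)⟩
  -- lower bound on each a i for i ≠ K
  have hai : ∀ i, i ≠ K → δ ^ ((1/2:ℝ) ^ (i+1)) ≤ a i := by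
    intro i hi
    have hnc := not_lt.1 (hK i hi)
    have hd : 0 < 1 - μ i * t := by nlinarith [(hμ i).1, (hμ i).2]
    have hlow : s i ≤ ‖blaschke ((μ i : ℝ) : ℂ) z‖ := by
      refine le_trans ?_ (blaschke_abs_lower (μ i) (hμ i).1 (hμ i).2 z hz)
      rw [le_div_iff₀ hd]
      exact hnc
    have : a i = ‖blaschke ((μ i : ℝ) : ℂ) z‖ ^ (M i) := by
      rw [hadef]
      simp only [norm_prod, norm_pow]
      rw [Finset.prod_pow_eq_pow_sum]
    rw [this, ← hspow i]
    exact pow_le_pow_left₀ (hs i).1.le hlow (M i)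
  -- the finite partial products are at least δ
  have hprod : ∀ N : ℕ, δ ≤ ∏ i ∈ (Finset.range N).erase K, a i := by
    intro N
    have hsum : ∑ i ∈ (Finset.range N).erase K, (1/2:ℝ) ^ (i+1) ≤ 1 := by
      have h1 : ∑ i ∈ (Finset.range N).erase K, (1/2:ℝ) ^ (i+1)
          ≤ ∑ i ∈ Finset.range N, (1/2:ℝ) ^ (i+1) :=
        Finset.sum_le_sum_of_subset_of_nonneg (Finset.erase_subset _ _)
          (fun i _ _ => by positivity)
      have h2 : ∑ i ∈ Finset.range N, (1/2:ℝ) ^ (i+1)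
          = (∑ i ∈ Finset.range N, (1/2:ℝ) ^ i) * (1/2) := by
        rw [Finset.sum_mul]
        exact Finset.sum_congr rfl fun i _ => (pow_succ _ _)
      have h3 := sum_geometric_two_le N
      calc ∑ i ∈ (Finset.range N).erase K, (1/2:ℝ) ^ (i+1)
          ≤ (∑ i ∈ Finset.range N, (1/2:ℝ) ^ i) * (1/2) := h1.trans h2.le
        _ ≤ 2 * (1/2) := by nlinarith
        _ = 1 := by norm_num
    calc δ = δ ^ (1:ℝ) := (Real.rpow_one δ).symm
      _ ≤ δ ^ (∑ i ∈ (Finset.range N).erase K, (1/2:ℝ) ^ (i+1)) :=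
          Real.rpow_le_rpow_of_exponent_ge hδ0 hδ1.le hsum
      _ = ∏ i ∈ (Finset.range N).erase K, δ ^ ((1/2:ℝ) ^ (i+1)) :=
          Real.rpow_sum_of_pos hδ0 _ _
      _ ≤ ∏ i ∈ (Finset.range N).erase K, a i :=
          Finset.prod_le_prod (fun i _ => (Real.rpow_pos_of_pos hδ0 _).le)
            (fun i hi => hai i (Finset.ne_of_mem_erase hi))
  have hδK : δ ≤ prodExcept a K := le_ciInf hprod
  have hle1 : ∀ k, prodExcept a k ≤ 1 := by
    intro k
    have : prodExcept a k ≤ ∏ i ∈ (Finset.range 0).erase k, a i :=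
      ciInf_le ⟨0, by rintro x ⟨N, rfl⟩; exact Finset.prod_nonneg fun i _ => ha0 i⟩ 0
    simpa using this
  have hbdd : BddAbove (Set.range fun k => prodExcept a k) := by
    refine ⟨1, ?_⟩
    rintro x ⟨k, rfl⟩
    exact hle1 k
  exact hδK.trans (le_ciSup hbdd K)
end

section
/- Let (m_n) be an increasing and unbounded sequence of positive integers. Then there exists a sequence (λ_n) of points of the open unit disk 𝔻 such that (λ_n) with multiplicities (m_n) is strongly separated, i.e., inf_n ∏_{k≠n} ρ(λ_n, λ_k)^{m_k} > 0, but not uniformly strongly separated, i.e., inf_{z∈𝔻} sup_n ∏_{k≠n} ρ(z, λ_k)^{m_k} = 0. -/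
open scoped BigOperators
open Metric Finset

/-! ### Auxiliary general lemmas -/

lemma SSep.sum_half_pow_le (s : Finset ℕ) : ∑ k ∈ s, (1/2:ℝ)^(k+2) ≤ 1/2 := by
  obtain ⟨N, hN⟩ := s.exists_nat_subset_range
  calc ∑ k ∈ s, (1/2:ℝ)^(k+2) ≤ ∑ k ∈ range N, (1/2:ℝ)^(k+2) :=
        Finset.sum_le_sum_of_subset_of_nonneg hN (fun i _ _ => by positivity)
    _ = (1/4) * ∑ k ∈ range N, (1/2:ℝ)^k := by
        rw [Finset.mul_sum]; exact Finset.sum_congr rfl (fun i _ => by ring)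
    _ ≤ 1/2 := by
        have h := geom_sum_eq (by norm_num : (1/2:ℝ) ≠ 1) N
        have h2 : ((1/2:ℝ)^N - 1)/(1/2-1) = 2*(1-(1/2)^N) := by ring
        have hp : (0:ℝ) ≤ (1/2:ℝ)^N := by positivity
        rw [h, h2]; linarith

lemma SSep.prod_one_sub_le_aux (s : Finset ℕ) (a c : ℕ → ℝ)
    (ha : ∀ k ∈ s, 0 ≤ a k) (hac : ∀ k ∈ s, 1 - c k ≤ a k) (hc : ∀ k ∈ s, 0 ≤ c k) :
    1 - ∑ k ∈ s, c k ≤ ∏ k ∈ s, a k := by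
  induction s using Finset.cons_induction with
  | empty => simp
  | cons x s hx ih =>
    rw [Finset.prod_cons, Finset.sum_cons]
    have hS : 0 ≤ ∑ k ∈ s, c k :=
      Finset.sum_nonneg (fun k hk => hc k (Finset.mem_cons_of_mem hk))
    have hP : 0 ≤ ∏ k ∈ s, a k :=
      Finset.prod_nonneg (fun k hk => ha k (Finset.mem_cons_of_mem hk))
    have hih : 1 - ∑ k ∈ s, c k ≤ ∏ k ∈ s, a k :=
      ih (fun k hk => ha k (Finset.mem_cons_of_mem hk))
        (fun k hk => hac k (Finset.mem_cons_of_mem hk))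
        (fun k hk => hc k (Finset.mem_cons_of_mem hk))
    have hax : 0 ≤ a x := ha x (Finset.mem_cons_self x s)
    have haxc : 1 - c x ≤ a x := hac x (Finset.mem_cons_self x s)
    have hcx : 0 ≤ c x := hc x (Finset.mem_cons_self x s)
    rcases le_or_gt (1 - c x) 0 with h | h
    · calc 1 - (c x + ∑ k ∈ s, c k) ≤ 0 := by linarith
        _ ≤ a x * ∏ k ∈ s, a k := mul_nonneg hax hP
    · nlinarith [mul_le_mul_of_nonneg_left hih h.le, mul_le_mul_of_nonneg_right haxc hP,
        mul_nonneg hcx hS]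

/-- pseudoHyp between two real points written as `(a-1)/(a+1)`. -/
lemma SSep.pseudoHyp_ratio (a b : ℝ) (ha : 0 < a) (hb : 0 < b) :
    pseudoHyp (((a-1)/(a+1) : ℝ) : ℂ) (((b-1)/(b+1) : ℝ) : ℂ) = |a-b|/(a+b) := by
  have ha1 : a + 1 ≠ 0 := by positivity
  have hb1 : b + 1 ≠ 0 := by positivity
  have hab : a + b ≠ 0 := by positivity
  unfold pseudoHyp
  rw [Complex.conj_ofReal]
  rw [show ((((a-1)/(a+1) : ℝ)) : ℂ) - (((b-1)/(b+1) : ℝ) : ℂ)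
      = ((((a-1)/(a+1) - (b-1)/(b+1)) : ℝ) : ℂ) by push_cast; ring]
  rw [show (1:ℂ) - (((a-1)/(a+1) : ℝ) : ℂ) * (((b-1)/(b+1) : ℝ) : ℂ)
      = (((1 - ((a-1)/(a+1)) * ((b-1)/(b+1))) : ℝ) : ℂ) by push_cast; ring]
  rw [Complex.norm_real, Complex.norm_real, Real.norm_eq_abs, Real.norm_eq_abs]
  have h1 : (a-1)/(a+1) - (b-1)/(b+1) = 2*(a-b)/((a+1)*(b+1)) := by field_simp; ring
  have h2 : 1 - ((a-1)/(a+1)) * ((b-1)/(b+1)) = 2*(a+b)/((a+1)*(b+1)) := by field_simp; ring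
  rw [h1, h2, abs_div, abs_div]
  rw [abs_of_pos (by positivity : (0:ℝ) < (a+1)*(b+1))]
  rw [abs_of_pos (by positivity : (0:ℝ) < 2*(a+b))]
  rw [abs_mul, abs_of_pos (by norm_num : (0:ℝ) < 2)]
  rw [div_div_div_cancel_right₀]
  · rw [mul_div_mul_left _ _ (by norm_num : (2:ℝ) ≠ 0)]
  · positivity

namespace SSep

variable (m : ℕ → ℕ)

/-- the multiplicative gaps -/
def gseq (k : ℕ) : ℕ := if k % 2 = 0 then 4 * m (k+1) - 1 else 2^(k+7) * m (k+1) * m (k+2)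

/-- parameters of the points: `l k = (P k - 1)/(P k + 1)` -/
def Pseq : ℕ → ℕ
  | 0 => 1
  | k+1 => gseq m k * Pseq k

/-- the partner of an index within its pair -/
def ptn (n : ℕ) : ℕ := if n % 2 = 0 then n + 1 else n - 1

/-- the sequence of points -/
noncomputable def lam (k : ℕ) : ℂ :=
  ((((Pseq m k : ℝ) - 1) / ((Pseq m k : ℝ) + 1) : ℝ) : ℂ)

variable {m}

lemma Pseq_succ (k : ℕ) : Pseq m (k+1) = gseq m k * Pseq m k := by
  simp [Pseq]

lemma g_ge (hpos : ∀ n, 0 < m n) (k : ℕ) : 3 ≤ gseq m k := by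
  unfold gseq
  split
  · have := hpos (k+1); omega
  · have h1 : (2:ℕ)^7 ≤ 2^(k+7) := Nat.pow_le_pow_right (by norm_num) (by omega)
    calc (3:ℕ) ≤ 2^(k+7) := le_trans (by norm_num) h1
      _ = 2^(k+7) * 1 * 1 := by ring
      _ ≤ 2^(k+7) * m (k+1) * m (k+2) :=
        Nat.mul_le_mul (Nat.mul_le_mul le_rfl (hpos (k+1))) (hpos (k+2))

lemma P_pos (hpos : ∀ n, 0 < m n) (k : ℕ) : 1 ≤ Pseq m k := by
  induction k with
  | zero => simp [Pseq]
  | succ k ih =>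
    have := g_ge hpos (m := m) k
    calc 1 ≤ 1 * 1 := by norm_num
      _ ≤ gseq m k * Pseq m k := Nat.mul_le_mul (by omega) ih
      _ = Pseq m (k+1) := (Pseq_succ k).symm

lemma P_mono (hpos : ∀ n, 0 < m n) : Monotone (Pseq m) := by
  apply monotone_nat_of_le_succ
  intro k
  have hg := g_ge hpos (m := m) k
  calc Pseq m k = 1 * Pseq m k := (one_mul _).symm
    _ ≤ gseq m k * Pseq m k := Nat.mul_le_mul (by omega) le_rfl
    _ = Pseq m (k+1) := (Pseq_succ k).symm

lemma P_gap (hpos : ∀ n, 0 < m n) {i j n : ℕ} (hij : i ≤ j) (hjn : j < n) :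
    gseq m j * Pseq m i ≤ Pseq m n := by
  calc gseq m j * Pseq m i ≤ gseq m j * Pseq m j :=
        Nat.mul_le_mul le_rfl (P_mono hpos hij)
    _ = Pseq m (j+1) := (Pseq_succ j).symm
    _ ≤ Pseq m n := P_mono hpos (by omega)

/-- the key arithmetic estimate for indices in different pairs -/
lemma natkey (hpos : ∀ n, 0 < m n) (hmono : Monotone m) {k n : ℕ} (h : k/2 ≠ n/2) :
    m k * 2 * min (Pseq m k) (Pseq m n) * 2^(k+2) ≤ max (Pseq m k) (Pseq m n) := by
  rcases Nat.lt_or_ge k n with hkn | hge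
  · -- k < n : k's pair is strictly earlier
    have hmin : min (Pseq m k) (Pseq m n) = Pseq m k :=
      min_eq_left (P_mono hpos hkn.le)
    have hmax : max (Pseq m k) (Pseq m n) = Pseq m n :=
      max_eq_right (P_mono hpos hkn.le)
    rw [hmin, hmax]
    have hgap : gseq m (2*(k/2)+1) * Pseq m k ≤ Pseq m n :=
      P_gap hpos (show k ≤ 2*(k/2)+1 by omega) (show 2*(k/2)+1 < n by omega)
    have hjodd : (2*(k/2)+1) % 2 ≠ 0 := by omega
    have hg : gseq m (2*(k/2)+1) = 2^(2*(k/2)+1+7) * m (2*(k/2)+1+1) * m (2*(k/2)+1+2) := by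
      unfold gseq; rw [if_neg hjodd]
    have hstep : m k * 2 * 2^(k+2) ≤ gseq m (2*(k/2)+1) := by
      rw [hg]
      calc m k * 2 * 2^(k+2) = m k * 2^(k+3) := by ring
        _ ≤ m (2*(k/2)+1+1) * 2^(2*(k/2)+1+7) :=
          Nat.mul_le_mul (hmono (by omega)) (Nat.pow_le_pow_right (by norm_num) (by omega))
        _ = 2^(2*(k/2)+1+7) * m (2*(k/2)+1+1) * 1 := by ring
        _ ≤ 2^(2*(k/2)+1+7) * m (2*(k/2)+1+1) * m (2*(k/2)+1+2) :=
          Nat.mul_le_mul le_rfl (hpos _)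
    calc m k * 2 * Pseq m k * 2^(k+2) = (m k * 2 * 2^(k+2)) * Pseq m k := by ring
      _ ≤ gseq m (2*(k/2)+1) * Pseq m k := Nat.mul_le_mul hstep le_rfl
      _ ≤ Pseq m n := hgap
  · -- n < k
    have hnk : n < k := by omega
    have hmin : min (Pseq m k) (Pseq m n) = Pseq m n :=
      min_eq_right (P_mono hpos hnk.le)
    have hmax : max (Pseq m k) (Pseq m n) = Pseq m k :=
      max_eq_left (P_mono hpos hnk.le)
    rw [hmin, hmax]
    have hk2 : 1 ≤ k/2 := by omega
    have hgap : gseq m (2*(k/2)-1) * Pseq m n ≤ Pseq m k :=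
      P_gap hpos (show n ≤ 2*(k/2)-1 by omega) (show 2*(k/2)-1 < k by omega)
    have hjodd : (2*(k/2)-1) % 2 ≠ 0 := by omega
    have hg : gseq m (2*(k/2)-1) = 2^(2*(k/2)-1+7) * m (2*(k/2)-1+1) * m (2*(k/2)-1+2) := by
      unfold gseq; rw [if_neg hjodd]
    have hstep : m k * 2 * 2^(k+2) ≤ gseq m (2*(k/2)-1) := by
      rw [hg]
      calc m k * 2 * 2^(k+2) = m k * 2^(k+3) := by ring
        _ ≤ m (2*(k/2)-1+2) * 2^(2*(k/2)-1+7) :=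
          Nat.mul_le_mul (hmono (by omega)) (Nat.pow_le_pow_right (by norm_num) (by omega))
        _ = 2^(2*(k/2)-1+7) * 1 * m (2*(k/2)-1+2) := by ring
        _ ≤ 2^(2*(k/2)-1+7) * m (2*(k/2)-1+1) * m (2*(k/2)-1+2) :=
          Nat.mul_le_mul (Nat.mul_le_mul le_rfl (hpos _)) le_rfl
    calc m k * 2 * Pseq m n * 2^(k+2) = (m k * 2 * 2^(k+2)) * Pseq m n := by ring
      _ ≤ gseq m (2*(k/2)-1) * Pseq m n := Nat.mul_le_mul hstep le_rfl
      _ ≤ Pseq m k := hgap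

lemma pair_char {k n : ℕ} (h : k/2 = n/2) : k = n ∨ k = ptn n := by
  unfold ptn; split <;> omega

lemma Ppos_real (hpos : ∀ n, 0 < m n) (k : ℕ) : (0:ℝ) < (Pseq m k : ℝ) := by
  have h : (0:ℕ) < Pseq m k := lt_of_lt_of_le Nat.one_pos (P_pos hpos k)
  exact_mod_cast h

/-- formula for the pseudo-hyperbolic distance between a generic real point and `lam k` -/
lemma pseudoHyp_lam (hpos : ∀ n, 0 < m n) (a : ℝ) (ha : 0 < a) (k : ℕ) :
    pseudoHyp (((a-1)/(a+1) : ℝ) : ℂ) (lam m k)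
      = |a - (Pseq m k : ℝ)| / (a + (Pseq m k : ℝ)) :=
  SSep.pseudoHyp_ratio a (Pseq m k : ℝ) ha (Ppos_real hpos k)

lemma pseudoHyp_lam_lam (hpos : ∀ n, 0 < m n) (n k : ℕ) :
    pseudoHyp (lam m n) (lam m k)
      = |(Pseq m n : ℝ) - (Pseq m k : ℝ)| / ((Pseq m n : ℝ) + (Pseq m k : ℝ)) :=
  SSep.pseudoHyp_ratio _ _ (Ppos_real hpos n) (Ppos_real hpos k)

lemma ratio_le_one (x y : ℝ) (hx : 0 < x) (hy : 0 < y) : |x - y| / (x + y) ≤ 1 := by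
  rw [div_le_one (by positivity)]
  exact abs_le.mpr ⟨by linarith, by linarith⟩

/-- factor lower bound for indices in different pairs -/
lemma factor_lb (hpos : ∀ n, 0 < m n) (hmono : Monotone m) {n k : ℕ} (h : k/2 ≠ n/2) :
    1 - (1/2:ℝ)^(k+2) ≤ pseudoHyp (lam m n) (lam m k) ^ m k := by
  rw [pseudoHyp_lam_lam hpos]
  set x : ℝ := (Pseq m k : ℝ) with hxdef
  set y : ℝ := (Pseq m n : ℝ) with hydef
  have hx : 0 < x := Ppos_real hpos k
  have hy : 0 < y := Ppos_real hpos n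
  have hMa : 0 < max x y := lt_max_of_lt_left hx
  have hMi : 0 < min x y := lt_min hx hy
  have key : (m k : ℝ) * 2 * min x y * 2^(k+2) ≤ max x y := by
    have h0 := natkey hpos hmono h
    have h2 : ((m k * 2 * min (Pseq m k) (Pseq m n) * 2^(k+2) : ℕ) : ℝ)
        ≤ ((max (Pseq m k) (Pseq m n) : ℕ) : ℝ) := by exact_mod_cast h0
    push_cast at h2
    simp only [← hxdef, ← hydef] at h2
    exact h2
  set ε : ℝ := 2 * min x y / max x y with hε
  have hεnn : 0 ≤ ε := by positivity
  have hpow : ((1:ℝ)/2)^(k+2) * 2^(k+2) = 1 := by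
    rw [← mul_pow]; norm_num
  have hmε : (m k : ℝ) * ε ≤ (1/2)^(k+2) := by
    have heq : (m k : ℝ) * ε = ((m k : ℝ) * 2 * min x y) / max x y := by
      rw [hε]; ring
    rw [heq, div_le_iff₀ hMa]
    have h3 := mul_le_mul_of_nonneg_left key
      (by positivity : (0:ℝ) ≤ (1/2)^(k+2))
    have h4 : (1/2:ℝ)^(k+2) * ((m k : ℝ) * 2 * min x y * 2^(k+2))
        = (m k : ℝ) * 2 * min x y := by
      calc (1/2:ℝ)^(k+2) * ((m k : ℝ) * 2 * min x y * 2^(k+2))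
          = ((m k : ℝ) * 2 * min x y) * ((1/2:ℝ)^(k+2) * 2^(k+2)) := by ring
        _ = (m k : ℝ) * 2 * min x y := by rw [hpow, mul_one]
    linarith [h3, h4.ge, h4.le]
  have hε1 : ε ≤ 1/4 := by
    have hm1 : (1:ℝ) ≤ (m k : ℝ) := by exact_mod_cast hpos k
    have hq : (1/2:ℝ)^(k+2) ≤ 1/4 := by
      calc (1/2:ℝ)^(k+2) ≤ (1/2)^2 :=
            pow_le_pow_of_le_one (by norm_num) (by norm_num) (by omega)
        _ = 1/4 := by norm_num
    nlinarith
  have hρ : 1 - ε ≤ |y - x| / (y + x) := by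
    have habs : |y - x| = max x y - min x y := (max_sub_min_eq_abs x y).symm
    have hsum : y + x = max x y + min x y := by rw [max_add_min]; ring
    have hεeq : ε * (max x y) = 2 * (min x y) := by
      rw [hε, div_mul_cancel₀ _ (ne_of_gt hMa)]
    rw [habs, hsum, le_div_iff₀ (by positivity)]
    nlinarith [hεeq, mul_nonneg hεnn hMi.le]
  have hbern : 1 - (m k : ℝ) * ε ≤ (1 - ε) ^ m k := by
    have := one_add_mul_le_pow (a := -ε) (by linarith) (m k)
    have e1 : (1 + -ε) = 1 - ε := by ring
    rw [e1] at this; linarith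
  have h01 : (0:ℝ) ≤ 1 - ε := by linarith
  calc 1 - (1/2:ℝ)^(k+2) ≤ 1 - (m k : ℝ) * ε := by linarith
    _ ≤ (1 - ε)^(m k) := hbern
    _ ≤ (|y - x| / (y + x))^(m k) := pow_le_pow_left₀ h01 hρ (m k)

/-- the partner factor is at least 1/2 -/
lemma partner_lb (hpos : ∀ n, 0 < m n) (hmono : Monotone m) (n : ℕ) :
    (1/2:ℝ) ≤ pseudoHyp (lam m n) (lam m (ptn n)) ^ m (ptn n) := by
  set e := 2*(n/2) with he
  have heeven : e % 2 = 0 := by omega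
  set M := m (e+1) with hM
  have hM1 : 1 ≤ M := hpos (e+1)
  have hq : Pseq m (e+1) = (4*M - 1) * Pseq m e := by
    rw [Pseq_succ]
    congr 1
    unfold gseq; rw [if_pos heeven]
  have hP : (0:ℝ) < (Pseq m e : ℝ) := Ppos_real hpos e
  have hMr : (1:ℝ) ≤ (M:ℝ) := by exact_mod_cast hM1
  have hρval : pseudoHyp (lam m e) (lam m (e+1)) = ((4*M:ℝ) - 2) / (4*M) := by
    rw [pseudoHyp_lam_lam hpos, hq]
    push_cast [Nat.cast_sub (by omega : 1 ≤ 4*M)]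
    rw [show ((Pseq m e : ℝ)) - (4*(M:ℝ) - 1) * (Pseq m e : ℝ)
        = -((4*(M:ℝ) - 2) * (Pseq m e : ℝ)) by ring]
    rw [abs_neg, abs_of_nonneg (by nlinarith)]
    rw [show (Pseq m e : ℝ) + (4*(M:ℝ) - 1) * (Pseq m e : ℝ)
        = (4*(M:ℝ)) * (Pseq m e : ℝ) by ring]
    rw [show (4*(M:ℝ) - 2) * (Pseq m e : ℝ) = (Pseq m e : ℝ) * (4*(M:ℝ) - 2) by ring,
      show (4*(M:ℝ)) * (Pseq m e : ℝ) = (Pseq m e : ℝ) * (4*(M:ℝ)) by ring]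
    rw [mul_div_mul_left _ _ (ne_of_gt hP)]
  have hρ0 : (0:ℝ) ≤ ((4*M:ℝ) - 2) / (4*M) := by
    apply div_nonneg <;> nlinarith
  have hρ1 : ((4*M:ℝ) - 2) / (4*M) ≤ 1 := by
    rw [div_le_one (by nlinarith)]; nlinarith
  have hbern : (1/2:ℝ) ≤ (((4*M:ℝ) - 2) / (4*M)) ^ M := by
    have heq : ((4*M:ℝ) - 2) / (4*M) = 1 + (-(1/(2*(M:ℝ)))) := by
      field_simp; ring
    have hb := one_add_mul_le_pow (a := -(1/(2*(M:ℝ)))) (by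
      have h05 : (0:ℝ) < 1/(2*(M:ℝ)) := by positivity
      linarith) M
    rw [← heq] at hb
    have hhalf : (M:ℝ) * (1/(2*(M:ℝ))) = 1/2 := by
      field_simp
    nlinarith [hb]
  have hsymm : pseudoHyp (lam m (e+1)) (lam m e) = pseudoHyp (lam m e) (lam m (e+1)) := by
    rw [pseudoHyp_lam_lam hpos, pseudoHyp_lam_lam hpos, abs_sub_comm,
      add_comm ((Pseq m (e+1) : ℝ)) ((Pseq m e : ℝ))]
  by_cases hev : n % 2 = 0
  · have hpt : ptn n = n + 1 := by unfold ptn; rw [if_pos hev]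
    have hne : n = e := by omega
    rw [hpt, hne, hρval]
    exact hbern
  · have hpt : ptn n = n - 1 := by unfold ptn; rw [if_neg hev]
    have hne : n = e + 1 := by omega
    have hpt' : ptn n = e := by omega
    rw [hpt', hne, hsymm, hρval]
    calc (1/2:ℝ) ≤ (((4*M:ℝ) - 2) / (4*M)) ^ M := hbern
      _ ≤ (((4*M:ℝ) - 2) / (4*M)) ^ m e :=
        pow_le_pow_of_le_one hρ0 hρ1 (hmono (by omega))

end SSep

set_option maxHeartbeats 2000000 in
/-- If the multiplicities increase to infinity, there is a strongly separated sequence in the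
unit disk which is not uniformly strongly separated. -/
theorem exists_strongly_separated_not_uniformly
    (m : ℕ → ℕ) (hpos : ∀ n, 0 < m n) (hmono : Monotone m)
    (hunb : ∀ N : ℕ, ∃ n, N < m n) :
    ∃ l : ℕ → ℂ, (∀ n, l n ∈ Metric.ball (0 : ℂ) 1) ∧
      (∃ δ > (0 : ℝ), ∀ n : ℕ,
          δ ≤ prodExcept (fun k => pseudoHyp (l n) (l k) ^ m k) n) ∧
      ¬ (∃ δ > (0 : ℝ), ∀ z ∈ Metric.ball (0 : ℂ) 1,
          δ ≤ ⨆ n : ℕ, prodExcept (fun k => pseudoHyp z (l k) ^ m k) n) := by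
  classical
  refine ⟨SSep.lam m, ?_, ?_, ?_⟩
  · -- membership in the disk
    intro n
    rw [mem_ball_zero_iff]
    unfold SSep.lam
    have hP : (1:ℝ) ≤ (SSep.Pseq m n : ℝ) := by exact_mod_cast SSep.P_pos hpos n
    rw [Complex.norm_real, Real.norm_eq_abs,
      abs_div, abs_of_nonneg (by linarith), abs_of_pos (by linarith),
      div_lt_one (by linarith)]
    linarith
  · -- strong separation
    refine ⟨1/4, by norm_num, fun n => ?_⟩
    apply le_ciInf
    intro N
    set f : ℕ → ℝ := fun k => pseudoHyp (SSep.lam m n) (SSep.lam m k) ^ m k with hf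
    have hfnn : ∀ k, 0 ≤ f k := by
      intro k
      have : 0 ≤ pseudoHyp (SSep.lam m n) (SSep.lam m k) := by
        rw [SSep.pseudoHyp_lam_lam hpos]; positivity
      exact pow_nonneg this _
    have hkey : ∀ train : Finset ℕ, (∀ k ∈ train, k/2 ≠ n/2) →
        (1/2:ℝ) ≤ ∏ k ∈ train, f k := by
      intro train ht
      have h1 : 1 - ∑ k ∈ train, (1/2:ℝ)^(k+2) ≤ ∏ k ∈ train, f k :=
        SSep.prod_one_sub_le_aux train f (fun k => (1/2:ℝ)^(k+2))
          (fun k _ => hfnn k)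
          (fun k hk => SSep.factor_lb hpos hmono (ht k hk))
          (fun k _ => by positivity)
      have h2 := SSep.sum_half_pow_le train
      linarith
    set s := (Finset.range N).erase n with hs
    by_cases hp : SSep.ptn n ∈ s
    · rw [← Finset.mul_prod_erase s f hp]
      have h1 : (1/2:ℝ) ≤ f (SSep.ptn n) := SSep.partner_lb hpos hmono n
      have h2 : (1/2:ℝ) ≤ ∏ k ∈ s.erase (SSep.ptn n), f k := by
        apply hkey
        intro k hk
        have hk1 : k ≠ SSep.ptn n := (Finset.mem_erase.mp hk).1
        have hk2 : k ≠ n := (Finset.mem_erase.mp (Finset.mem_of_mem_erase hk)).1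
        intro hc
        rcases SSep.pair_char hc with hh | hh
        · exact hk2 hh
        · exact hk1 hh
      have hmul := mul_le_mul h1 h2 (by norm_num) (le_trans (by norm_num) h1)
      linarith
    · have h2 : (1/2:ℝ) ≤ ∏ k ∈ s, f k := by
        apply hkey
        intro k hk
        have hk2 : k ≠ n := (Finset.mem_erase.mp hk).1
        have hk1 : k ≠ SSep.ptn n := fun hEq => hp (hEq ▸ hk)
        intro hc
        rcases SSep.pair_char hc with hh | hh
        · exact hk2 hh
        · exact hk1 hh
      linarith
  · -- not uniformly strongly separated
    rintro ⟨δ, hδ, h⟩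
    obtain ⟨K, hK⟩ := exists_nat_gt (-5 * Real.log δ)
    obtain ⟨n₀, hn₀⟩ := hunb (K*K)
    set e := 2*n₀ with he
    have hme : K*K < m e := lt_of_lt_of_le hn₀ (hmono (by omega))
    set t := Nat.sqrt (m e) with ht
    have htK : K ≤ t := Nat.le_sqrt.mpr hme.le
    have ht1 : 1 ≤ t := Nat.le_sqrt.mpr (by have := hpos e; omega)
    have htme : t*t ≤ m e := by have hsq := Nat.sqrt_le' (m e); rwa [pow_two] at hsq
    have htle : t ≤ m e := Nat.sqrt_le_self (m e)
    set W := t * SSep.Pseq m e with hW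
    have hW1 : (1:ℕ) ≤ W := by simpa using Nat.mul_le_mul ht1 (SSep.P_pos hpos e)
    have hWr : (1:ℝ) ≤ (W:ℝ) := by exact_mod_cast hW1
    set z : ℂ := ((((W:ℝ) - 1)/((W:ℝ) + 1) : ℝ) : ℂ) with hz
    have hzball : z ∈ Metric.ball (0:ℂ) 1 := by
      rw [mem_ball_zero_iff, hz, Complex.norm_real, Real.norm_eq_abs,
        abs_div, abs_of_nonneg (by linarith), abs_of_pos (by linarith),
        div_lt_one (by linarith)]
      linarith
    have hsup := h z hzball
    -- notation
    set T : ℝ := (t:ℝ) with hT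
    have hT1 : (1:ℝ) ≤ T := by rw [hT]; exact_mod_cast ht1
    have hPe : (0:ℝ) < (SSep.Pseq m e : ℝ) := SSep.Ppos_real hpos e
    have hcastW : (W:ℝ) = T * (SSep.Pseq m e : ℝ) := by rw [hW]; push_cast; ring
    set Mr : ℝ := (m (e+1) : ℝ) with hMr
    have hM1 : (1:ℝ) ≤ Mr := by rw [hMr]; exact_mod_cast hpos (e+1)
    have hTM : T ≤ Mr := by
      have h1 : t ≤ m (e+1) := le_trans htle (hmono (by omega))
      rw [hT, hMr]; exact_mod_cast h1
    -- the two special factors are small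
    have hbe : pseudoHyp z (SSep.lam m e) ^ m e ≤ Real.exp (-T/5) := by
      have hρe : pseudoHyp z (SSep.lam m e) = (T-1)/(T+1) := by
        rw [hz, SSep.pseudoHyp_lam hpos _ (by linarith) e, hcastW,
          show T * (SSep.Pseq m e : ℝ) - (SSep.Pseq m e : ℝ)
            = (T-1) * (SSep.Pseq m e : ℝ) by ring,
          abs_of_nonneg (mul_nonneg (by linarith) hPe.le),
          show T * (SSep.Pseq m e : ℝ) + (SSep.Pseq m e : ℝ)
            = (T+1) * (SSep.Pseq m e : ℝ) by ring,
          mul_div_mul_right _ _ (ne_of_gt hPe)]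
      have hρ0 : (0:ℝ) ≤ (T-1)/(T+1) := by
        apply div_nonneg <;> linarith
      have hstep : (T-1)/(T+1) ≤ Real.exp (-(1/T)) := by
        have h1t : 1/T ≤ 1 := by
          rw [div_le_one (by linarith)]; linarith
        have hexp1 : (1 - 1/T) * (T+1) = T - 1/T := by field_simp; ring
        have hle1 : (T-1)/(T+1) ≤ 1 - 1/T := by
          rw [div_le_iff₀ (by linarith : (0:ℝ) < T+1)]
          nlinarith [hexp1]
        have hle2 : 1 - 1/T ≤ Real.exp (-(1/T)) := by
          have := Real.add_one_le_exp (-(1/T))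
          linarith
        linarith
      calc pseudoHyp z (SSep.lam m e) ^ m e ≤ (Real.exp (-(1/T)))^ m e := by
            rw [hρe]; exact pow_le_pow_left₀ hρ0 hstep (m e)
        _ = Real.exp ((m e : ℝ) * (-(1/T))) := (Real.exp_nat_mul _ (m e)).symm
        _ ≤ Real.exp (-T/5) := by
            apply Real.exp_le_exp.mpr
            have hmet : T*T ≤ (m e : ℝ) := by rw [hT]; exact_mod_cast htme
            have hTpos : (0:ℝ) < T := by linarith
            have h1 : (m e : ℝ) * (-(1/T)) = -((m e : ℝ)/T) := by ring
            rw [h1]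
            have h2 : T ≤ (m e : ℝ)/T := by
              rw [le_div_iff₀ hTpos]; nlinarith
            linarith
    have hbe1 : pseudoHyp z (SSep.lam m (e+1)) ^ m (e+1) ≤ Real.exp (-T/5) := by
      have heeven : e % 2 = 0 := by omega
      have hq : SSep.Pseq m (e+1) = (4 * m (e+1) - 1) * SSep.Pseq m e := by
        rw [SSep.Pseq_succ]
        congr 1
        unfold SSep.gseq; rw [if_pos heeven]
      have hq' : (SSep.Pseq m (e+1) : ℝ) = (4*Mr - 1) * (SSep.Pseq m e : ℝ) := by
        rw [hq]
        push_cast [Nat.cast_sub (by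
          have := hpos (e+1); omega : 1 ≤ 4 * m (e+1))]
        ring
      have hρe : pseudoHyp z (SSep.lam m (e+1)) = (4*Mr - 1 - T)/(4*Mr - 1 + T) := by
        rw [hz, SSep.pseudoHyp_lam hpos _ (by linarith) (e+1), hcastW, hq',
          show T * (SSep.Pseq m e : ℝ) - (4*Mr - 1) * (SSep.Pseq m e : ℝ)
            = -((4*Mr - 1 - T) * (SSep.Pseq m e : ℝ)) by ring,
          abs_neg, abs_of_nonneg (mul_nonneg (by linarith) hPe.le),
          show T * (SSep.Pseq m e : ℝ) + (4*Mr - 1) * (SSep.Pseq m e : ℝ)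
            = (4*Mr - 1 + T) * (SSep.Pseq m e : ℝ) by ring,
          mul_div_mul_right _ _ (ne_of_gt hPe)]
      have hden : (0:ℝ) < 4*Mr - 1 + T := by linarith
      have hρ0 : (0:ℝ) ≤ (4*Mr - 1 - T)/(4*Mr - 1 + T) := by
        apply div_nonneg <;> linarith
      have hstep : (4*Mr - 1 - T)/(4*Mr - 1 + T) ≤ Real.exp (-(2*T/(4*Mr - 1 + T))) := by
        have h1 : (4*Mr - 1 - T)/(4*Mr - 1 + T) = 1 - 2*T/(4*Mr - 1 + T) := by
          field_simp; ring
        have h2 := Real.add_one_le_exp (-(2*T/(4*Mr - 1 + T)))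
        linarith [h1.le, h1.ge]
      calc pseudoHyp z (SSep.lam m (e+1)) ^ m (e+1)
          ≤ (Real.exp (-(2*T/(4*Mr - 1 + T))))^ m (e+1) := by
            rw [hρe]; exact pow_le_pow_left₀ hρ0 hstep (m (e+1))
        _ = Real.exp (Mr * (-(2*T/(4*Mr - 1 + T)))) := by
            rw [hMr]; exact (Real.exp_nat_mul _ (m (e+1))).symm
        _ ≤ Real.exp (-T/5) := by
            apply Real.exp_le_exp.mpr
            have h1 : Mr * (-(2*T/(4*Mr - 1 + T))) = -(2*T*Mr/(4*Mr - 1 + T)) := by ring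
            rw [h1]
            have h2 : T/5 ≤ 2*T*Mr/(4*Mr - 1 + T) := by
              rw [div_le_div_iff₀ (by norm_num) hden]
              nlinarith
            linarith
    -- every term of the supremum is small
    have hfle1 : ∀ k, pseudoHyp z (SSep.lam m k) ^ m k ≤ 1 := by
      intro k
      apply pow_le_one₀
      · rw [hz, SSep.pseudoHyp_lam hpos _ (by linarith) k]; positivity
      · rw [hz, SSep.pseudoHyp_lam hpos _ (by linarith) k]
        exact SSep.ratio_le_one _ _ (by linarith) (SSep.Ppos_real hpos k)
    have hfnn : ∀ k, 0 ≤ pseudoHyp z (SSep.lam m k) ^ m k := by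
      intro k
      apply pow_nonneg
      rw [hz, SSep.pseudoHyp_lam hpos _ (by linarith) k]; positivity
    have hmain : ∀ n : ℕ,
        prodExcept (fun k => pseudoHyp z (SSep.lam m k) ^ m k) n ≤ Real.exp (-T/5) := by
      intro n
      set k₀ := if n = e then e+1 else e with hk₀
      have hk₀n : k₀ ≠ n := by
        by_cases hne : n = e <;> simp [hk₀, hne] <;> omega
      have hk₀b : pseudoHyp z (SSep.lam m k₀) ^ m k₀ ≤ Real.exp (-T/5) := by
        by_cases hne : n = e
        · simp only [hk₀, if_pos hne]; exact hbe1
        · simp only [hk₀, if_neg hne]; exact hbe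
      have hbb : BddBelow (Set.range fun N =>
          ∏ k ∈ (Finset.range N).erase n, pseudoHyp z (SSep.lam m k) ^ m k) := by
        refine ⟨0, ?_⟩
        rintro x ⟨N, rfl⟩
        exact Finset.prod_nonneg (fun k _ => hfnn k)
      have hmem : k₀ ∈ (Finset.range (k₀+1)).erase n :=
        Finset.mem_erase.mpr ⟨hk₀n, Finset.self_mem_range_succ k₀⟩
      calc prodExcept (fun k => pseudoHyp z (SSep.lam m k) ^ m k) n
          ≤ ∏ k ∈ (Finset.range (k₀+1)).erase n, pseudoHyp z (SSep.lam m k) ^ m k :=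
            ciInf_le hbb (k₀+1)
        _ ≤ pseudoHyp z (SSep.lam m k₀) ^ m k₀ := by
            rw [← Finset.mul_prod_erase _ _ hmem]
            have hle := Finset.prod_le_one
              (f := fun k => pseudoHyp z (SSep.lam m k) ^ m k)
              (s := ((Finset.range (k₀+1)).erase n).erase k₀)
              (fun k _ => hfnn k) (fun k _ => hfle1 k)
            nlinarith [hfnn k₀, hle,
              Finset.prod_nonneg (s := ((Finset.range (k₀+1)).erase n).erase k₀)
                (f := fun k => pseudoHyp z (SSep.lam m k) ^ m k) (fun k _ => hfnn k)]
        _ ≤ Real.exp (-T/5) := hk₀b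
    have hsle : (⨆ n : ℕ, prodExcept (fun k => pseudoHyp z (SSep.lam m k) ^ m k) n)
        ≤ Real.exp (-T/5) := ciSup_le hmain
    have hexp : Real.exp (-T/5) < δ := by
      have hKr : (K:ℝ) ≤ T := by rw [hT]; exact_mod_cast htK
      have h1 : -T/5 < Real.log δ := by linarith
      exact (Real.lt_log_iff_exp_lt hδ).mp h1
    linarith
end

section
/- Let (m_n) be a sequence of positive integers and let 0 < ν < 1. Then there exists a sequence (λ_n) of points of the open unit disk 𝔻 such that (λ_n) with multiplicities (m_n) is strongly separated, i.e., inf_n ∏_{k≠n} ρ(λ_n, λ_k)^{m_k} > 0, and ρ(λ_n, λ_{n+1})^{m_{n+1}} = ν for infinitely many n. -/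
open scoped BigOperators
open Metric Finset

lemma one_sub_sum_le_prod_s6 (T : Finset ℕ) (f : ℕ → ℝ) (h0 : ∀ i ∈ T, 0 ≤ f i)
    (h1 : ∀ i ∈ T, f i ≤ 1) : 1 - ∑ i ∈ T, f i ≤ ∏ i ∈ T, (1 - f i) := by
  induction T using Finset.cons_induction with
  | empty => simp
  | cons a s ha ih =>
    rw [Finset.sum_cons, Finset.prod_cons]
    have h0a := h0 a (Finset.mem_cons_self a s)
    have h1a := h1 a (Finset.mem_cons_self a s)
    have ihs := ih (fun i hi => h0 i (Finset.mem_cons_of_mem hi))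
      (fun i hi => h1 i (Finset.mem_cons_of_mem hi))
    have hs : ∑ i ∈ s, f i ≥ 0 := Finset.sum_nonneg (fun i hi => h0 i (Finset.mem_cons_of_mem hi))
    nlinarith [Finset.prod_nonneg (s := s) (f := fun i => 1 - f i)
      (fun i hi => by have := h1 i (Finset.mem_cons_of_mem hi); simp; linarith)]

lemma step_exists (m : ℕ → ℕ) : ∀ N : ℕ, ∃ n, N ≤ n ∧ m n ≤ m (n + 1) := by
  intro N
  by_contra h
  push_neg at h
  have key : ∀ k, m (N + k) + k ≤ m N := by
    intro k
    induction k with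
    | zero => simp
    | succ k ih =>
      have h2 := h (N + k) (Nat.le_add_right _ _)
      have e : N + (k + 1) = (N + k) + 1 := rfl
      rw [e]
      omega
  have := key (m N + 1)
  omega




namespace SSaux

def gg (f : ℕ → ℕ) : ℕ → ℕ
  | 0 => f 0
  | j+1 => f (gg f j + 2)

def Spec (f : ℕ → ℕ) (i : ℕ) : Prop := ∃ j, gg f j = i

noncomputable def eps (i : ℕ) : ℝ := 1 - (2:ℝ)⁻¹ ^ (i+5)

def MM (m : ℕ → ℕ) (j : ℕ) : ℕ := ∑ i ∈ Finset.range (j+3), m i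

open scoped Classical in
noncomputable def dd (m : ℕ → ℕ) (ν : ℝ) (f : ℕ → ℕ) (i : ℕ) : ℝ :=
  if Spec f i then ν ^ ((m (i+1) : ℝ)⁻¹) else (eps i) ^ ((MM m i : ℝ)⁻¹)

noncomputable def mob (a t : ℝ) : ℝ := (a + t) / (1 + a * t)

noncomputable def ll (m : ℕ → ℕ) (ν : ℝ) (f : ℕ → ℕ) : ℕ → ℝ
  | 0 => 0
  | n+1 => mob (ll m ν f n) (dd m ν f n)

lemma eps_pos (i : ℕ) : 0 < eps i := by
  have : (2:ℝ)⁻¹ ^ (i+5) ≤ (2:ℝ)⁻¹ ^ 1 := by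
    apply pow_le_pow_of_le_one (by norm_num) (by norm_num); omega
  simp only [eps]; nlinarith

lemma eps_lt_one (i : ℕ) : eps i < 1 := by
  have : (0:ℝ) < (2:ℝ)⁻¹ ^ (i+5) := by positivity
  simp only [eps]; linarith

lemma eps_ge (k i : ℕ) (h : k ≤ i + 3) : 1 - (2:ℝ)⁻¹ ^ (k+2) ≤ eps i := by
  have : (2:ℝ)⁻¹ ^ (i+5) ≤ (2:ℝ)⁻¹ ^ (k+2) := by
    apply pow_le_pow_of_le_one (by norm_num) (by norm_num); omega
  simp only [eps]; linarith

section
variable (m : ℕ → ℕ) (ν : ℝ) (f : ℕ → ℕ)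

lemma MM_pos (hm : ∀ n, 0 < m n) {j : ℕ} : 0 < MM m j :=
  Finset.sum_pos (fun i _ => hm i) ⟨0, by simp [Finset.mem_range]⟩

lemma dd_pos (hν0 : 0 < ν) {i : ℕ} : 0 < dd m ν f i := by
  unfold dd; split
  · exact Real.rpow_pos_of_pos hν0 _
  · exact Real.rpow_pos_of_pos (eps_pos i) _

lemma dd_lt_one (hm : ∀ n, 0 < m n) (hν0 : 0 < ν ) (hν1 : ν < 1) {i : ℕ} :
    dd m ν f i < 1 := by
  unfold dd; split
  · apply Real.rpow_lt_one hν0.le hν1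
    simp only [inv_pos, Nat.cast_pos]; exact hm _
  · apply Real.rpow_lt_one (eps_pos i).le (eps_lt_one i)
    simp only [inv_pos, Nat.cast_pos]; exact MM_pos m hm

lemma mob_nonneg {a t : ℝ} (ha : 0 ≤ a) (ht : 0 < t) (ht1 : t < 1) (ha1 : a < 1) :
    0 ≤ mob a t := by
  unfold mob
  positivity

lemma mob_lt_one {a t : ℝ} (ha : 0 ≤ a) (ha1 : a < 1) (ht : 0 < t) (ht1 : t < 1) :
    mob a t < 1 := by
  unfold mob
  rw [div_lt_one (by nlinarith)]
  nlinarith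

lemma lt_mob {a t : ℝ} (ha : 0 ≤ a) (ha1 : a < 1) (ht : 0 < t) (ht1 : t < 1) :
    a < mob a t := by
  unfold mob
  rw [lt_div_iff₀ (by nlinarith)]
  nlinarith [mul_pos ht (by nlinarith : (0:ℝ) < 1 - a * a)]

lemma ll_nonneg_lt_one (hm : ∀ n, 0 < m n) (hν0 : 0 < ν) (hν1 : ν < 1) :
    ∀ n, 0 ≤ ll m ν f n ∧ ll m ν f n < 1 := by
  intro n
  induction n with
  | zero => simp [ll]
  | succ n ih =>
    have hd := dd_pos m ν f hν0 (i := n)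
    have hd1 := dd_lt_one m ν f hm hν0 hν1 (i := n)
    constructor
    · exact le_of_lt (lt_of_le_of_lt ih.1 (lt_mob ih.1 ih.2 hd hd1))
    · exact mob_lt_one ih.1 ih.2 hd hd1

lemma ll_lt_succ (hm : ∀ n, 0 < m n) (hν0 : 0 < ν) (hν1 : ν < 1) (n : ℕ) :
    ll m ν f n < ll m ν f (n+1) := by
  have ih := ll_nonneg_lt_one m ν f hm hν0 hν1 n
  exact lt_mob ih.1 ih.2 (dd_pos m ν f hν0) (dd_lt_one m ν f hm hν0 hν1)

lemma ll_mono (hm : ∀ n, 0 < m n) (hν0 : 0 < ν) (hν1 : ν < 1) {n k : ℕ} (h : n ≤ k) :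
    ll m ν f n ≤ ll m ν f k := by
  induction k with
  | zero =>
    have : n = 0 := by omega
    subst this; rfl
  | succ k ih =>
    rcases Nat.lt_or_ge n (k+1) with h2 | h2
    · exact le_trans (ih (by omega)) (ll_lt_succ m ν f hm hν0 hν1 k).le
    · have : n = k+1 := by omega
      subst this; rfl

end

noncomputable def rr (x y : ℝ) : ℝ := (y - x) / (1 - x * y)

lemma pseudoHyp_real (x y : ℝ) (hx : 0 ≤ x) (hxy : x ≤ y) (hy : y < 1) :
    pseudoHyp (x : ℂ) (y : ℂ) = rr x y ∧ pseudoHyp (y : ℂ) (x : ℂ) = rr x y := by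
  have hden : (0:ℝ) < 1 - x * y := by nlinarith
  have h1 : ((x : ℂ) - y) = ((x - y : ℝ) : ℂ) := by push_cast; ring
  have h2 : ((y : ℂ) - x) = ((y - x : ℝ) : ℂ) := by push_cast; ring
  have h3 : (1 - (starRingEnd ℂ) (x:ℂ) * y) = ((1 - x * y : ℝ) : ℂ) := by
    rw [Complex.conj_ofReal]; push_cast; ring
  have h4 : (1 - (starRingEnd ℂ) (y:ℂ) * x) = ((1 - x * y : ℝ) : ℂ) := by
    rw [Complex.conj_ofReal]; push_cast; ring
  constructor
  · unfold pseudoHyp rr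
    rw [h1, h3, Complex.norm_real, Complex.norm_real, Real.norm_eq_abs, Real.norm_eq_abs,
      abs_of_nonpos (by linarith : x - y ≤ 0), abs_of_nonneg hden.le]
    ring
  · unfold pseudoHyp rr
    rw [h2, h4, Complex.norm_real, Complex.norm_real, Real.norm_eq_abs, Real.norm_eq_abs,
      abs_of_nonneg (by linarith : (0:ℝ) ≤ y - x), abs_of_nonneg hden.le]

lemma rr_mob {a t : ℝ} (ha : 0 ≤ a) (ha1 : a < 1) (ht : 0 < t) (ht1 : t < 1) :
    rr a (mob a t) = t := by
  have hden : (0:ℝ) < 1 + a * t := by nlinarith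
  have hlt := mob_lt_one (a := a) (t := t) ha ha1 ht ht1
  have hge := mob_nonneg (a := a) (t := t) ha ht ht1 ha1
  have hpos : 0 < 1 - a * mob a t := by nlinarith
  have key : mob a t - a = t * (1 - a * mob a t) := by
    unfold mob
    field_simp
    ring
  unfold rr
  rw [key, mul_div_assoc, div_self hpos.ne', mul_one]

lemma rr_mono_left {a b c : ℝ} (ha : 0 ≤ a) (hab : a ≤ b) (hbc : b ≤ c) (hc : c < 1) :
    rr b c ≤ rr a c := by
  unfold rr
  have h1 : (0:ℝ) < 1 - b * c := by nlinarith
  have h2 : (0:ℝ) < 1 - a * c := by nlinarith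
  rw [div_le_div_iff₀ h1 h2]
  nlinarith [mul_nonneg (sub_nonneg.2 hab) (by nlinarith : (0:ℝ) ≤ 1 - c * c)]

lemma rr_mono_right {a b c : ℝ} (ha : 0 ≤ a) (hab : a ≤ b) (hbc : b ≤ c) (hc : c < 1) :
    rr a b ≤ rr a c := by
  unfold rr
  have h1 : (0:ℝ) < 1 - a * b := by nlinarith
  have h2 : (0:ℝ) < 1 - a * c := by nlinarith
  rw [div_le_div_iff₀ h1 h2]
  nlinarith [mul_nonneg (sub_nonneg.2 hbc) (by nlinarith : (0:ℝ) ≤ 1 - a * a)]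



section
variable (m : ℕ → ℕ) (ν : ℝ) (f : ℕ → ℕ)
variable (hm : ∀ n, 0 < m n) (hν0 : 0 < ν) (hν1 : ν < 1)

lemma pseudoHyp_consec (hm : ∀ n, 0 < m n) (hν0 : 0 < ν) (hν1 : ν < 1) (n : ℕ) :
    pseudoHyp ((ll m ν f n : ℝ) : ℂ) ((ll m ν f (n+1) : ℝ) : ℂ) = dd m ν f n := by
  have h := ll_nonneg_lt_one m ν f hm hν0 hν1 n
  have h1 := ll_nonneg_lt_one m ν f hm hν0 hν1 (n+1)
  have hle := (ll_lt_succ m ν f hm hν0 hν1 n).le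
  rw [(pseudoHyp_real _ _ h.1 hle h1.2).1]
  show rr (ll m ν f n) (mob (ll m ν f n) (dd m ν f n)) = _
  exact rr_mob h.1 h.2 (dd_pos m ν f hν0) (dd_lt_one m ν f hm hν0 hν1)

lemma dd_le_pseudoHyp (hm : ∀ n, 0 < m n) (hν0 : 0 < ν) (hν1 : ν < 1)
    {n j k : ℕ} (hnk : n < k) (hnj : n ≤ j) (hjk : j < k) :
    dd m ν f j ≤ pseudoHyp ((ll m ν f n : ℝ) : ℂ) ((ll m ν f k : ℝ) : ℂ) ∧
    dd m ν f j ≤ pseudoHyp ((ll m ν f k : ℝ) : ℂ) ((ll m ν f n : ℝ) : ℂ) := by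
  have hn := ll_nonneg_lt_one m ν f hm hν0 hν1 n
  have hj := ll_nonneg_lt_one m ν f hm hν0 hν1 j
  have hj1 := ll_nonneg_lt_one m ν f hm hν0 hν1 (j+1)
  have hk := ll_nonneg_lt_one m ν f hm hν0 hν1 k
  have hnj' := ll_mono m ν f hm hν0 hν1 hnj
  have hjk' := ll_mono m ν f hm hν0 hν1 (Nat.succ_le_of_lt hjk)
  have hnk' := ll_mono m ν f hm hν0 hν1 hnk.le
  have step : dd m ν f j ≤ rr (ll m ν f n) (ll m ν f k) := by
    have e1 : rr (ll m ν f j) (ll m ν f (j+1)) = dd m ν f j := by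
      show rr (ll m ν f j) (mob (ll m ν f j) (dd m ν f j)) = _
      exact rr_mob hj.1 hj.2 (dd_pos m ν f hν0) (dd_lt_one m ν f hm hν0 hν1)
    calc dd m ν f j = rr (ll m ν f j) (ll m ν f (j+1)) := e1.symm
      _ ≤ rr (ll m ν f j) (ll m ν f k) :=
          rr_mono_right hj.1 (ll_lt_succ m ν f hm hν0 hν1 j).le hjk' hk.2
      _ ≤ rr (ll m ν f n) (ll m ν f k) := rr_mono_left hn.1 hnj'
          (ll_mono m ν f hm hν0 hν1 hjk.le) hk.2
  have hph := pseudoHyp_real (ll m ν f n) (ll m ν f k) hn.1 hnk' hk.2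
  rw [hph.1, hph.2]
  exact ⟨step, step⟩
end

lemma rpow_inv_pow_eq {x : ℝ} (hx0 : 0 < x) {c : ℕ} (hc : 0 < c) :
    (x ^ ((c:ℝ)⁻¹)) ^ c = x := by
  rw [← Real.rpow_natCast (x ^ ((c:ℝ)⁻¹)) c, ← Real.rpow_mul hx0.le,
    inv_mul_cancel₀ (by exact_mod_cast hc.ne'), Real.rpow_one]

lemma rpow_inv_pow_ge {x : ℝ} (hx0 : 0 < x) (hx1 : x ≤ 1) {c k : ℕ} (hc : 0 < c)
    (hkc : k ≤ c) : x ≤ (x ^ ((c:ℝ)⁻¹)) ^ k := by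
  rw [← Real.rpow_natCast (x ^ ((c:ℝ)⁻¹)) k, ← Real.rpow_mul hx0.le]
  nth_rewrite 1 [← Real.rpow_one x]
  apply Real.rpow_le_rpow_of_exponent_ge hx0 hx1
  rw [inv_mul_eq_div, div_le_one (by exact_mod_cast hc)]
  exact_mod_cast hkc

section
variable (m : ℕ → ℕ) (ν : ℝ) (f : ℕ → ℕ)

lemma gg_succ_ge (hf1 : ∀ N, N ≤ f N) (j : ℕ) : gg f j + 2 ≤ gg f (j+1) := hf1 _

lemma gg_gap (hf1 : ∀ N, N ≤ f N) {j j' : ℕ} (h : j < j') : gg f j + 2 ≤ gg f j' := by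
  induction j' with
  | zero => omega
  | succ j' ih =>
    rcases Nat.lt_or_ge j j' with h2 | h2
    · exact le_trans (ih h2) (by linarith [gg_succ_ge f hf1 j'])
    · have : j = j' := by omega
      subst this
      exact gg_succ_ge f hf1 j
lemma gg_ge_self (hf1 : ∀ N, N ≤ f N) (j : ℕ) : j ≤ gg f j := by
  induction j with
  | zero => exact Nat.zero_le _
  | succ j ih => have := gg_succ_ge f hf1 j; omega

lemma spec_not_adjacent (hf1 : ∀ N, N ≤ f N) {i : ℕ} (h1 : Spec f i)
    (h2 : Spec f (i+1)) : False := by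
  obtain ⟨a, ha⟩ := h1
  obtain ⟨b, hb⟩ := h2
  rcases Nat.lt_trichotomy a b with h | h | h
  · have := gg_gap f hf1 h; omega
  · subst h; omega
  · have := gg_gap f hf1 h; omega

lemma spec_m_le (hf2 : ∀ N, m (f N) ≤ m (f N + 1)) {i : ℕ} (h : Spec f i) :
    m i ≤ m (i+1) := by
  obtain ⟨j, hj⟩ := h
  subst hj
  cases j with
  | zero => exact hf2 0
  | succ j => exact hf2 _

lemma m_le_MM (k j : ℕ) (hk : k ≤ j + 2) : m k ≤ MM m j := by
  exact Finset.single_le_sum (f := fun i => m i) (fun i _ => Nat.zero_le _)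
    (Finset.mem_range.2 (by omega))

lemma dd_pow_spec (hν0 : 0 < ν) {i : ℕ} (hm : ∀ n, 0 < m n) (h : Spec f i) :
    dd m ν f i ^ (m (i+1)) = ν := by
  unfold dd
  rw [if_pos h]
  exact rpow_inv_pow_eq hν0 (hm _)

lemma dd_pow_spec_ge (hν0 : 0 < ν) (hν1 : ν < 1) {i k : ℕ} (hm : ∀ n, 0 < m n)
    (h : Spec f i) (hk : m k ≤ m (i+1)) : ν ≤ dd m ν f i ^ (m k) := by
  unfold dd
  rw [if_pos h]
  exact rpow_inv_pow_ge hν0 hν1.le (hm _) hk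

lemma dd_pow_nonspec_ge {i k : ℕ} (hm : ∀ n, 0 < m n) (h : ¬ Spec f i)
    (hk : k ≤ i + 2) : eps i ≤ dd m ν f i ^ (m k) := by
  unfold dd
  rw [if_neg h]
  exact rpow_inv_pow_ge (eps_pos i) (eps_lt_one i).le (MM_pos m hm) (m_le_MM m k i hk)

end

section
variable (m : ℕ → ℕ) (ν : ℝ) (f : ℕ → ℕ)

lemma pseudoHyp_consec' (hm : ∀ n, 0 < m n) (hν0 : 0 < ν) (hν1 : ν < 1) (n : ℕ) :
    pseudoHyp ((ll m ν f (n+1) : ℝ) : ℂ) ((ll m ν f n : ℝ) : ℂ) = dd m ν f n := by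
  have h := ll_nonneg_lt_one m ν f hm hν0 hν1 n
  have h1 := ll_nonneg_lt_one m ν f hm hν0 hν1 (n+1)
  have hle := (ll_lt_succ m ν f hm hν0 hν1 n).le
  rw [(pseudoHyp_real _ _ h.1 hle h1.2).2]
  show rr (ll m ν f n) (mob (ll m ν f n) (dd m ν f n)) = _
  exact rr_mob h.1 h.2 (dd_pos m ν f hν0) (dd_lt_one m ν f hm hν0 hν1)

lemma one_sub_pow_bounds (k : ℕ) :
    0 ≤ 1 - (2:ℝ)⁻¹ ^ (k+2) ∧ 1 - (2:ℝ)⁻¹ ^ (k+2) ≤ 1 := by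
  have h1 : (2:ℝ)⁻¹ ^ (k+2) ≤ 1 := pow_le_one₀ (by norm_num) (by norm_num)
  have h2 : (0:ℝ) < (2:ℝ)⁻¹ ^ (k+2) := by positivity
  constructor <;> linarith

lemma factor_bound (hm : ∀ n, 0 < m n) (hν0 : 0 < ν) (hν1 : ν < 1)
    (hf1 : ∀ N, N ≤ f N) (hf2 : ∀ N, m (f N) ≤ m (f N + 1))
    {n k : ℕ} (hkn : k ≠ n) :
    (if k = n+1 ∨ n = k+1 then ν else 1) * (1 - (2:ℝ)⁻¹ ^ (k+2)) ≤
      pseudoHyp ((ll m ν f n : ℝ) : ℂ) ((ll m ν f k : ℝ) : ℂ) ^ m k := by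
  obtain ⟨hb0, hb1⟩ := one_sub_pow_bounds k
  rcases Nat.lt_trichotomy k n with hlt | heq | hgt
  · -- k < n
    rcases Nat.lt_or_ge (k+1) n with h2 | h2
    · -- k + 2 ≤ n : far case
      have hnsp : ¬ Spec f k ∨ ¬ Spec f (k+1) := by
        by_contra h
        push_neg at h
        exact spec_not_adjacent f hf1 h.1 h.2
      obtain ⟨j, hjnsp, hkj, hjn, hkj2⟩ :
          ∃ j, ¬ Spec f j ∧ k ≤ j ∧ j < n ∧ k ≤ j + 2 := by
        rcases hnsp with h | h
        · exact ⟨k, h, le_refl _, by omega, by omega⟩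
        · exact ⟨k+1, h, by omega, by omega, by omega⟩
      have hdle := (dd_le_pseudoHyp m ν f hm hν0 hν1 hlt hkj hjn).2
      have hval : eps j ≤ dd m ν f j ^ m k := dd_pow_nonspec_ge m ν f hm hjnsp hkj2
      have heps : 1 - (2:ℝ)⁻¹ ^ (k+2) ≤ eps j := eps_ge k j (by omega)
      have hifne : ¬ (k = n+1 ∨ n = k+1) := by omega
      rw [if_neg hifne, one_mul]
      calc 1 - (2:ℝ)⁻¹ ^ (k+2) ≤ eps j := heps
        _ ≤ dd m ν f j ^ m k := hval
        _ ≤ _ := pow_le_pow_left₀ (dd_pos m ν f hν0).le hdle _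
    · -- n = k+1 : adjacent left
      have hn : n = k + 1 := by omega
      subst hn
      have hcons := pseudoHyp_consec' m ν f hm hν0 hν1 k
      rw [hcons, if_pos (Or.inr rfl)]
      by_cases hsp : Spec f k
      · have := dd_pow_spec_ge m ν f hν0 hν1 hm hsp (spec_m_le m f hf2 hsp)
        nlinarith
      · have hval : eps k ≤ dd m ν f k ^ m k := dd_pow_nonspec_ge m ν f hm hsp (by omega)
        have heps : 1 - (2:ℝ)⁻¹ ^ (k+2) ≤ eps k := eps_ge k k (by omega)
        nlinarith
  · omega
  · -- n < k
    rcases Nat.lt_or_ge (n+1) k with h2 | h2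
    · -- n + 2 ≤ k : far case
      have hnsp : ¬ Spec f (k-2) ∨ ¬ Spec f (k-1) := by
        by_contra h
        push_neg at h
        have e : k - 1 = (k-2) + 1 := by omega
        rw [e] at h
        exact spec_not_adjacent f hf1 h.1 h.2
      obtain ⟨j, hjnsp, hnj, hjk, hkj2⟩ :
          ∃ j, ¬ Spec f j ∧ n ≤ j ∧ j < k ∧ k ≤ j + 2 := by
        rcases hnsp with h | h
        · exact ⟨k-2, h, by omega, by omega, by omega⟩
        · exact ⟨k-1, h, by omega, by omega, by omega⟩
      have hdle := (dd_le_pseudoHyp m ν f hm hν0 hν1 hgt hnj hjk).1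
      have hval : eps j ≤ dd m ν f j ^ m k := dd_pow_nonspec_ge m ν f hm hjnsp hkj2
      have heps : 1 - (2:ℝ)⁻¹ ^ (k+2) ≤ eps j := eps_ge k j (by omega)
      have hifne : ¬ (k = n+1 ∨ n = k+1) := by omega
      rw [if_neg hifne, one_mul]
      calc 1 - (2:ℝ)⁻¹ ^ (k+2) ≤ eps j := heps
        _ ≤ dd m ν f j ^ m k := hval
        _ ≤ _ := pow_le_pow_left₀ (dd_pos m ν f hν0).le hdle _
    · -- k = n+1 : adjacent right
      have hk : k = n + 1 := by omega
      subst hk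
      have hcons := pseudoHyp_consec m ν f hm hν0 hν1 n
      rw [hcons, if_pos (Or.inl rfl)]
      by_cases hsp : Spec f n
      · rw [dd_pow_spec m ν f hν0 hm hsp]
        nlinarith
      · have hval : eps n ≤ dd m ν f n ^ m (n+1) := dd_pow_nonspec_ge m ν f hm hsp (by omega)
        have heps : 1 - (2:ℝ)⁻¹ ^ (n+1+2) ≤ eps n := eps_ge (n+1) n (by omega)
        obtain ⟨hb0', hb1'⟩ := one_sub_pow_bounds (n+1)
        nlinarith

end

lemma geom_tail (N : ℕ) : ∑ k ∈ Finset.range N, (2:ℝ)⁻¹ ^ (k+2) = 1/2 - (2:ℝ)⁻¹ ^ (N+1) := by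
  induction N with
  | zero => norm_num
  | succ N ih =>
    rw [Finset.sum_range_succ, ih, show N+2 = (N+1)+1 from rfl, pow_succ, pow_succ]
    ring

section
variable (m : ℕ → ℕ) (ν : ℝ) (f : ℕ → ℕ)

lemma prod_bound (hm : ∀ n, 0 < m n) (hν0 : 0 < ν) (hν1 : ν < 1)
    (hf1 : ∀ N, N ≤ f N) (hf2 : ∀ N, m (f N) ≤ m (f N + 1)) (n N : ℕ) :
    ν^2 / 2 ≤ ∏ k ∈ (Finset.range N).erase n,
      pseudoHyp ((ll m ν f n : ℝ) : ℂ) ((ll m ν f k : ℝ) : ℂ) ^ m k := by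
  classical
  set T := (Finset.range N).erase n with hT
  set w : ℕ → ℝ := fun k => if k = n+1 ∨ n = k+1 then ν else 1 with hw
  have step1 : ∏ k ∈ T, w k * (1 - (2:ℝ)⁻¹ ^ (k+2)) ≤
      ∏ k ∈ T, pseudoHyp ((ll m ν f n : ℝ) : ℂ) ((ll m ν f k : ℝ) : ℂ) ^ m k := by
    apply Finset.prod_le_prod
    · intro k _
      have := (one_sub_pow_bounds k).1
      have hw0 : 0 ≤ w k := by
        simp only [hw]; split <;> [exact hν0.le; norm_num]
      positivity
    · intro k hk
      exact factor_bound m ν f hm hν0 hν1 hf1 hf2 (Finset.ne_of_mem_erase hk)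
  have step2 : ∏ k ∈ T, w k * (1 - (2:ℝ)⁻¹ ^ (k+2)) =
      (∏ k ∈ T, w k) * ∏ k ∈ T, (1 - (2:ℝ)⁻¹ ^ (k+2)) := Finset.prod_mul_distrib
  have step3 : ∏ k ∈ T, w k = ν ^ (T.filter (fun k => k = n+1 ∨ n = k+1)).card := by
    rw [hw, Finset.prod_ite, Finset.prod_const, Finset.prod_const, one_pow, mul_one]
  have hcard : (T.filter (fun k => k = n+1 ∨ n = k+1)).card ≤ 2 := by
    have hsub : T.filter (fun k => k = n+1 ∨ n = k+1) ⊆ insert (n+1) {n-1} := by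
      intro k hk
      have := (Finset.mem_filter.1 hk).2
      simp only [Finset.mem_insert, Finset.mem_singleton]
      omega
    calc (T.filter (fun k => k = n+1 ∨ n = k+1)).card ≤ _ := Finset.card_le_card hsub
      _ ≤ 2 := by
        apply le_trans (Finset.card_insert_le _ _)
        simp
  have step4 : ν ^ 2 ≤ ∏ k ∈ T, w k := by
    rw [step3]
    exact pow_le_pow_of_le_one hν0.le hν1.le hcard
  have step5 : (1:ℝ)/2 ≤ ∏ k ∈ T, (1 - (2:ℝ)⁻¹ ^ (k+2)) := by
    have hsum : ∑ k ∈ T, (2:ℝ)⁻¹ ^ (k+2) ≤ 1/2 := by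
      have h1 : ∑ k ∈ T, (2:ℝ)⁻¹ ^ (k+2) ≤ ∑ k ∈ Finset.range N, (2:ℝ)⁻¹ ^ (k+2) := by
        apply Finset.sum_le_sum_of_subset_of_nonneg (Finset.erase_subset _ _)
        intro k _ _
        positivity
      have h2 := geom_tail N
      have h3 : (0:ℝ) < (2:ℝ)⁻¹ ^ (N+1) := by positivity
      linarith
    have := one_sub_sum_le_prod_s6 T (fun k => (2:ℝ)⁻¹ ^ (k+2))
      (fun i _ => by positivity) (fun i _ => (by
        have h1 : (2:ℝ)⁻¹ ^ (i+2) ≤ 1 := pow_le_one₀ (by norm_num) (by norm_num)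
        exact h1))
    linarith
  have hw2 : (0:ℝ) < ν ^ 2 := by positivity
  calc ν^2/2 = ν^2 * (1/2) := by ring
    _ ≤ (∏ k ∈ T, w k) * ∏ k ∈ T, (1 - (2:ℝ)⁻¹ ^ (k+2)) := by
        apply mul_le_mul step4 step5 (by norm_num)
        linarith [step4]
    _ = _ := step2.symm
    _ ≤ _ := step1

end
end SSaux


/-- For any multiplicities and any `0 < ν < 1` there is a strongly separated sequence with
`ρ(λ_n, λ_{n+1})^{m_{n+1}} = ν` infinitely often. -/
theorem exists_strongly_separated_with_close_consecutive_points
    (m : ℕ → ℕ) (hm : ∀ n, 0 < m n) (ν : ℝ) (hν0 : 0 < ν) (hν1 : ν < 1) :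
    ∃ l : ℕ → ℂ, (∀ n, l n ∈ Metric.ball (0 : ℂ) 1) ∧
      (∃ δ > (0 : ℝ), ∀ n : ℕ,
          δ ≤ prodExcept (fun k => pseudoHyp (l n) (l k) ^ m k) n) ∧
      (∀ N : ℕ, ∃ n ≥ N, pseudoHyp (l n) (l (n + 1)) ^ m (n + 1) = ν) := by
  classical
  choose f hf1 hf2 using step_exists m
  refine ⟨fun n => ((SSaux.ll m ν f n : ℝ) : ℂ), ?_, ?_, ?_⟩
  · intro n
    have h := SSaux.ll_nonneg_lt_one m ν f hm hν0 hν1 n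
    rw [Metric.mem_ball, dist_zero_right]
    rw [Complex.norm_real, Real.norm_eq_abs, abs_of_nonneg h.1]
    exact h.2
  · refine ⟨ν^2/2, by positivity, fun n => ?_⟩
    apply le_ciInf
    intro N
    exact SSaux.prod_bound m ν f hm hν0 hν1 hf1 hf2 n N
  · intro N
    refine ⟨SSaux.gg f N, SSaux.gg_ge_self f hf1 N, ?_⟩
    rw [SSaux.pseudoHyp_consec m ν f hm hν0 hν1]
    exact SSaux.dd_pow_spec m ν f hν0 hm ⟨N, rfl⟩
end

section
/- Let ν ∈ (0,1), let (M_n) be a sequence of positive integers with M_n → ∞, let (ρ_n) be a sequence in (0,1) with ρ_n^{M_n} = ν for every n, and let (t_n) be a sequence in (0,1) with t_n → 1. Then ((1 − t_n)/(1 − ρ_n²·t_n))^{M_n} → 0 as n → ∞. -/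
open Filter

/-- If `ρ_n^{M_n} = ν ∈ (0,1)` with `M_n → ∞` and `t_n → 1`, then
`((1 - t_n)/(1 - ρ_n² t_n))^{M_n} → 0`. -/
theorem tendsto_ratio_pow_zero
    (ν : ℝ) (hν0 : 0 < ν) (hν1 : ν < 1)
    (M : ℕ → ℕ) (hMpos : ∀ n, 0 < M n) (hM : Tendsto M atTop atTop)
    (r : ℕ → ℝ) (hr0 : ∀ n, 0 < r n) (hr1 : ∀ n, r n < 1)
    (hrM : ∀ n, r n ^ M n = ν)
    (t : ℕ → ℝ) (ht0 : ∀ n, 0 < t n) (ht1 : ∀ n, t n < 1)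
    (ht : Tendsto t atTop (nhds 1)) :
    Tendsto (fun n => ((1 - t n) / (1 - r n ^ 2 * t n)) ^ M n) atTop (nhds 0) := by
  have key : ∀ n, ((1 - t n) / (1 - r n ^ 2 * t n)) ^ M n ≤
      (1 - t n) / ((1 - t n) + t n * (1 - ν)) := by
    intro n
    have hr0n := hr0 n
    have hr1n := hr1 n
    have ht0n := ht0 n
    have ht1n := ht1 n
    have ha0 : (0:ℝ) < 1 - t n := by linarith
    have hr2 : r n ^ 2 < 1 := by nlinarith
    have hb0 : (0:ℝ) < t n * (1 - r n ^ 2) := mul_pos ht0n (by linarith)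
    have hden : 1 - r n ^ 2 * t n = (1 - t n) + t n * (1 - r n ^ 2) := by ring
    set c : ℝ := (M n : ℝ) with hc
    have hc0 : (0:ℝ) ≤ c := Nat.cast_nonneg _
    -- Bernoulli : r^M ≥ 1 - M (1 - r)
    have hBer : 1 + c * (-(1 - r n)) ≤ (1 + (-(1 - r n))) ^ M n :=
      one_add_mul_le_pow (by linarith) (M n)
    have hBer' : 1 - c * (1 - r n) ≤ ν := by
      have h : (1 + (-(1 - r n))) ^ M n = ν := by rw [← hrM n]; ring_nf
      linarith [hBer, h.le, h.ge]
    -- M * b ≥ t (1 - ν)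
    have hMb : t n * (1 - ν) ≤ c * (t n * (1 - r n ^ 2)) := by
      have h1 : (1:ℝ) - ν ≤ c * (1 - r n) := by linarith
      have h2 : c * (1 - r n) ≤ c * (1 - r n ^ 2) := by
        nlinarith [mul_nonneg (mul_nonneg hc0 hr0n.le) (sub_nonneg.2 hr1n.le)]
      have h3 := mul_le_mul_of_nonneg_left (h1.trans h2) ht0n.le
      have h4 : t n * (c * (1 - r n ^ 2)) = c * (t n * (1 - r n ^ 2)) := by ring
      linarith
    -- Bernoulli for the ratio
    set x := (t n * (1 - r n ^ 2)) / (1 - t n) with hx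
    have hx0 : 0 < x := div_pos hb0 ha0
    have h1 : (1 - t n) / (1 - r n ^ 2 * t n) = (1 + x)⁻¹ := by
      rw [hx, hden]
      field_simp
    have hB2 : 1 + c * x ≤ (1 + x) ^ M n :=
      one_add_mul_le_pow (by linarith) (M n)
    have hpos1 : (0:ℝ) < 1 + c * x := by positivity
    have step1 : ((1 - t n) / (1 - r n ^ 2 * t n)) ^ M n ≤ (1 + c * x)⁻¹ := by
      rw [h1, inv_pow]
      exact inv_anti₀ hpos1 hB2
    have hinv : (1 + c * x)⁻¹ = (1 - t n) / ((1 - t n) + c * (t n * (1 - r n ^ 2))) := by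
      rw [hx]
      rw [eq_div_iff (by nlinarith)]
      field_simp
      exact div_self (by nlinarith [mul_nonneg hc0 hb0.le] : (0:ℝ) < 1 - t n + c * t n * (1 - r n ^ 2)).ne'
    have step2 : (1 + c * x)⁻¹ ≤ (1 - t n) / ((1 - t n) + t n * (1 - ν)) := by
      rw [hinv]
      gcongr
    exact step1.trans step2
  have hnonneg : ∀ n, 0 ≤ ((1 - t n) / (1 - r n ^ 2 * t n)) ^ M n := by
    intro n
    have hr0n := hr0 n; have hr1n := hr1 n; have ht0n := ht0 n; have ht1n := ht1 n
    have h : (0:ℝ) < 1 - r n ^ 2 * t n := by nlinarith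
    exact pow_nonneg (div_nonneg (by linarith) h.le) _
  have hnum : Tendsto (fun n => 1 - t n) atTop (nhds 0) := by
    simpa using ht.const_sub 1
  have hdenlim : Tendsto (fun n => (1 - t n) + t n * (1 - ν)) atTop (nhds (1 - ν)) := by
    have h2 : Tendsto (fun n => t n * (1 - ν)) atTop (nhds (1 * (1 - ν))) :=
      ht.mul tendsto_const_nhds
    have := hnum.add h2
    simpa using this
  have hlim : Tendsto (fun n => (1 - t n) / ((1 - t n) + t n * (1 - ν))) atTop (nhds 0) := by
    have := hnum.div hdenlim (by linarith)
    rw [zero_div] at this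
    exact this
  exact squeeze_zero hnonneg key hlim
end

section
/- Let (A_n) be a sequence of complex square matrices with all eigenvalues in 𝔻, and let M > 0 be a constant such that for every sequence (φ_n) in H^∞ with sup_n ‖φ_n‖_∞ ≤ 1 there exists f ∈ H^∞ with ‖f‖_∞ ≤ M and f(A_n) = φ_n(A_n) for all n. Then for every positive integer N and every ε > 0 there exist f₁, …, f_N ∈ H^∞ such that f_i(A_j) = δ_{i,j}·Id for i, j = 1, …, N and sup_{z∈𝔻} ∑_{j=1}^N |f_j(z)| ≤ M² + ε. -/
open scoped BigOperators
open Metric Finset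

/-! ### Auxiliary machinery -/

section BeurlingAux

open Filter FormalMultilinearSeries
open scoped ENNReal NNReal Topology ComplexConjugate

noncomputable def taylorCoeff (f : ℂ → ℂ) (k : ℕ) : ℂ :=
  iteratedDeriv k f 0 / (Nat.factorial k : ℂ)

lemma beur_coeff_eq {f : ℂ → ℂ} {p : FormalMultilinearSeries ℂ ℂ ℂ} {r : ℝ≥0∞}
    (hp : HasFPowerSeriesOnBall f p 0 r) (k : ℕ) : taylorCoeff f k = p.coeff k := by
  have h := hp.factorial_smul (1 : ℂ) k
  rw [iteratedFDeriv_apply_eq_iteratedDeriv_mul_prod] at h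
  simp only [Finset.prod_const, one_pow, one_smul, nsmul_eq_mul] at h
  have : (p k) (fun _ => (1:ℂ)) = p.coeff k := rfl
  rw [this] at h
  rw [taylorCoeff, ← h]
  rw [mul_comm, mul_div_assoc, div_self (by exact_mod_cast k.factorial_ne_zero), mul_one]

lemma beur_coeff_bound (p : FormalMultilinearSeries ℂ ℂ ℂ) {s : ℝ≥0}
    (hs : (s : ℝ≥0∞) < p.radius) : ∃ C : ℝ, 0 < C ∧ ∀ n, ‖p.coeff n‖ * (s:ℝ)^n ≤ C := by
  obtain ⟨C, hC0, hC⟩ := p.norm_mul_pow_le_of_lt_radius hs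
  exact ⟨C, hC0, fun n => by rw [← p.norm_apply_eq_norm_coef]; exact hC n⟩

lemma beur_mul_series {f g : ℂ → ℂ} {p q : FormalMultilinearSeries ℂ ℂ ℂ} {u : ℝ≥0}
    (hu0 : 0 < u) (hp : HasFPowerSeriesOnBall f p 0 u) (hq : HasFPowerSeriesOnBall g q 0 u) :
    HasFPowerSeriesOnBall (fun z => f z * g z)
      (FormalMultilinearSeries.ofScalars ℂ
        (fun n => ∑ k ∈ Finset.range (n+1), p.coeff k * q.coeff (n - k))) 0 (min u 1) := by
  set c : ℕ → ℂ := fun n => ∑ k ∈ Finset.range (n+1), p.coeff k * q.coeff (n - k) with hc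
  set P := FormalMultilinearSeries.ofScalars ℂ c with hP
  have hrad : (u : ℝ≥0∞) ≤ P.radius := by
    apply ENNReal.le_of_forall_nnreal_lt
    intro s' hs'
    rw [ENNReal.coe_lt_coe] at hs'
    set s : ℝ≥0 := (s' + u)/2 with hsdef
    have hs'sR : (s':ℝ) < (s:ℝ) := by
      rw [hsdef]; push_cast
      have : (s':ℝ) < (u:ℝ) := by exact_mod_cast hs'
      linarith
    have hsu : (s : ℝ≥0∞) < (u:ℝ≥0∞) := by
      rw [ENNReal.coe_lt_coe, ← NNReal.coe_lt_coe]
      rw [hsdef]; push_cast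
      have : (s':ℝ) < (u:ℝ) := by exact_mod_cast hs'
      linarith
    have hs0 : (0:ℝ) < s := lt_of_le_of_lt s'.coe_nonneg hs'sR
    obtain ⟨Cp, hCp0, hCp⟩ := beur_coeff_bound p (lt_of_lt_of_le hsu hp.r_le)
    obtain ⟨Cq, hCq0, hCq⟩ := beur_coeff_bound q (lt_of_lt_of_le hsu hq.r_le)
    apply P.le_radius_of_summable_norm
    have hcb : ∀ n, ‖P n‖ * (s':ℝ)^n ≤ (Cp * Cq) * ((n+1) * ((s':ℝ)/(s:ℝ))^n) := by
      intro n
      rw [hP, FormalMultilinearSeries.ofScalars_norm]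
      have h1 : ‖c n‖ ≤ (n+1) * (Cp * Cq) / (s:ℝ)^n := by
        rw [hc]
        refine le_trans (norm_sum_le _ _) ?_
        have : ∀ k ∈ Finset.range (n+1), ‖p.coeff k * q.coeff (n - k)‖ ≤ (Cp * Cq) / (s:ℝ)^n := by
          intro k hk
          rw [Finset.mem_range, Nat.lt_succ_iff] at hk
          rw [norm_mul]
          have e1 : ‖p.coeff k‖ ≤ Cp / (s:ℝ)^k := by
            rw [le_div_iff₀ (by positivity)]; exact hCp k
          have e2 : ‖q.coeff (n-k)‖ ≤ Cq / (s:ℝ)^(n-k) := by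
            rw [le_div_iff₀ (by positivity)]; exact hCq (n-k)
          calc ‖p.coeff k‖ * ‖q.coeff (n-k)‖ ≤ (Cp / (s:ℝ)^k) * (Cq / (s:ℝ)^(n-k)) := by
                apply mul_le_mul e1 e2 (norm_nonneg _) (by positivity)
          _ = (Cp * Cq) / (s:ℝ)^n := by
                rw [div_mul_div_comm, ← pow_add]
                congr 2
                omega
        refine le_trans (Finset.sum_le_sum this) ?_
        rw [Finset.sum_const, Finset.card_range, nsmul_eq_mul]
        push_cast
        exact le_of_eq (by ring)
      calc ‖c n‖ * (s':ℝ)^n ≤ ((n+1) * (Cp * Cq) / (s:ℝ)^n) * (s':ℝ)^n := by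
            apply mul_le_mul_of_nonneg_right h1 (by positivity)
      _ = (Cp * Cq) * ((n+1) * ((s':ℝ)/(s:ℝ))^n) := by
            rw [div_pow]; field_simp
    apply Summable.of_nonneg_of_le (fun n => by positivity) hcb
    apply Summable.mul_left
    have hlt : ‖(s':ℝ)/(s:ℝ)‖ < 1 := by
      rw [Real.norm_eq_abs, abs_of_nonneg (by positivity)]
      exact (div_lt_one hs0).mpr hs'sR
    have h1 : Summable (fun n : ℕ => (n:ℝ) * ((s':ℝ)/(s:ℝ))^n) := by
      simpa using summable_pow_mul_geometric_of_norm_lt_one (R := ℝ) 1 hlt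
    have h2 : Summable (fun n : ℕ => ((s':ℝ)/(s:ℝ))^n) :=
      summable_geometric_of_lt_one (by positivity) ((div_lt_one hs0).mpr hs'sR)
    exact (h1.add h2).congr (fun n => by ring)
  constructor
  · exact le_trans (min_le_left _ _) hrad
  · exact lt_min (by exact_mod_cast hu0) one_pos
  · intro y hy
    rw [EMetric.mem_ball, edist_zero_right] at hy
    have hyu : (‖y‖₊ : ℝ≥0∞) < u := lt_of_lt_of_le hy (min_le_left _ _)
    have hyball : y ∈ Metric.eball (0:ℂ) u := by
      rw [EMetric.mem_ball, edist_zero_right]; exact hyu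
    have hfs : HasSum (fun n => p.coeff n * y^n) (f y) := by
      have h0 := hp.hasSum hyball
      rw [zero_add] at h0
      have he : (fun n => p.coeff n * y ^ n) = fun n => p n fun _ => y := by
        funext n; rw [p.apply_eq_pow_smul_coeff, smul_eq_mul]; ring
      rw [he]; exact h0
    have hgs : HasSum (fun n => q.coeff n * y^n) (g y) := by
      have h0 := hq.hasSum hyball
      rw [zero_add] at h0
      have he : (fun n => q.coeff n * y ^ n) = fun n => q n fun _ => y := by
        funext n; rw [q.apply_eq_pow_smul_coeff, smul_eq_mul]; ring
      rw [he]; exact h0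
    have hnp : Summable fun n => ‖p.coeff n * y^n‖ := by
      have h := p.summable_norm_mul_pow (r := ‖y‖₊) (lt_of_lt_of_le hyu hp.r_le)
      refine h.congr fun n => ?_
      rw [norm_mul, norm_pow, ← p.norm_apply_eq_norm_coef, coe_nnnorm]
    have hnq : Summable fun n => ‖q.coeff n * y^n‖ := by
      have h := q.summable_norm_mul_pow (r := ‖y‖₊) (lt_of_lt_of_le hyu hq.r_le)
      refine h.congr fun n => ?_
      rw [norm_mul, norm_pow, ← q.norm_apply_eq_norm_coef, coe_nnnorm]
    have hmain := hasSum_sum_range_mul_of_summable_norm hnp hnq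
    rw [hfs.tsum_eq, hgs.tsum_eq] at hmain
    have he2 : (fun n => P n fun _ => y) =
        (fun n => ∑ k ∈ Finset.range (n+1), (p.coeff k * y^k) * (q.coeff (n-k) * y^(n-k))) := by
      funext n
      rw [hP, FormalMultilinearSeries.ofScalars_apply_eq, smul_eq_mul, hc, Finset.sum_mul]
      refine Finset.sum_congr rfl fun k hk => ?_
      rw [Finset.mem_range, Nat.lt_succ_iff] at hk
      have : y^k * y^(n-k) = y^n := by rw [← pow_add, Nat.add_sub_cancel' hk]
      calc p.coeff k * q.coeff (n-k) * y^n
          = (p.coeff k * q.coeff (n-k)) * (y^k * y^(n-k)) := by rw [this]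
      _ = p.coeff k * y^k * (q.coeff (n-k) * y^(n-k)) := by ring
    rw [he2, zero_add]
    exact hmain

lemma beur_hinf_hasSeries {f : ℂ → ℂ} (hf : HinfOn f) {u : ℝ≥0} (hu0 : 0 < u)
    (hu1 : (u:ℝ) < 1) :
    HasFPowerSeriesOnBall f (cauchyPowerSeries f 0 u) 0 u :=
  (hf.1.mono (closedBall_subset_ball hu1)).hasFPowerSeriesOnBall hu0

lemma beur_nnreal_mid {r : ℝ≥0} (h : (r:ℝ) < 1) :
    0 < ((r+1)/2 : ℝ≥0) ∧ (r:ℝ) < (((r+1)/2 : ℝ≥0):ℝ) ∧ ((((r+1)/2 : ℝ≥0)):ℝ) < 1 := by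
  have hc : ((((r+1)/2 : ℝ≥0)):ℝ) = ((r:ℝ)+1)/2 := by push_cast; ring
  refine ⟨?_, by rw [hc]; linarith [r.coe_nonneg], by rw [hc]; linarith⟩
  rw [← NNReal.coe_lt_coe, hc]
  push_cast
  linarith [r.coe_nonneg]

lemma beur_hinf_const (c : ℂ) : HinfOn (fun _ => c) :=
  ⟨differentiableOn_const c, ⟨‖c‖, fun _ _ => le_refl _⟩⟩

lemma beur_hinf_mul {f g : ℂ → ℂ} (hf : HinfOn f) (hg : HinfOn g) :
    HinfOn (fun z => f z * g z) := by
  obtain ⟨hfd, Cf, hCf⟩ := hf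
  obtain ⟨hgd, Cg, hCg⟩ := hg
  refine ⟨hfd.mul hgd, ⟨Cf * Cg, fun z hz => ?_⟩⟩
  have h0 : (0:ℂ) ∈ Metric.ball (0:ℂ) 1 := by simp
  rw [norm_mul]
  exact mul_le_mul (hCf z hz) (hCg z hz) (norm_nonneg _)
    (le_trans (norm_nonneg _) (hCf 0 h0))

lemma beur_hinf_sum {ι : Type*} (t : Finset ι) (ψ : ι → ℂ → ℂ)
    (h : ∀ k ∈ t, HinfOn (ψ k)) :
    HinfOn (fun z => ∑ k ∈ t, ψ k z) := by
  classical
  induction t using Finset.induction_on with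
  | empty => simpa using beur_hinf_const 0
  | insert a s hx ih =>
    simp only [Finset.sum_insert hx]
    obtain ⟨hd1, C1, hC1⟩ := h a (Finset.mem_insert_self a s)
    obtain ⟨hd2, C2, hC2⟩ := ih (fun k hk => h k (Finset.mem_insert_of_mem hk))
    exact ⟨hd1.add hd2, ⟨C1 + C2, fun z hz => le_trans (norm_add_le _ _)
      (add_le_add (hC1 z hz) (hC2 z hz))⟩⟩

section MatrixNorm
attribute [local instance] Matrix.linftyOpNormedRing Matrix.linftyOpNormedAlgebra

variable {d : ℕ} {A : Matrix (Fin d) (Fin d) ℂ} {rA : ℝ≥0} {CA : ℝ}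

lemma beur_pow_decay {d : ℕ} (A : Matrix (Fin d) (Fin d) ℂ)
    (hA : ∀ μ ∈ spectrum ℂ A, ‖μ‖ < 1) :
    ∃ r : ℝ≥0, (r:ℝ) < 1 ∧ ∃ C : ℝ, 0 ≤ C ∧ ∀ k : ℕ, ‖A ^ k‖ ≤ C * (r:ℝ)^k := by
  obtain ⟨r₀, hr₀1, hr₀⟩ : ∃ r₀ : ℝ≥0, r₀ < 1 ∧ ∀ μ ∈ spectrum ℂ A, ‖μ‖₊ ≤ r₀ := by
    have hfin := A.finite_spectrum
    rcases Set.eq_empty_or_nonempty (spectrum ℂ A) with he | hne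
    · exact ⟨0, by norm_num, fun μ hμ => by simp [he] at hμ⟩
    · set s := hfin.toFinset
      have hs : s.Nonempty := Set.Finite.toFinset_nonempty hfin |>.mpr hne
      refine ⟨s.sup' hs (fun μ => ‖μ‖₊), ?_, fun μ hμ => ?_⟩
      · refine (Finset.sup'_lt_iff hs).mpr (fun μ hμ => ?_)
        have : μ ∈ spectrum ℂ A := (Set.Finite.mem_toFinset hfin).mp hμ
        have h2 := hA μ this
        rw [← NNReal.coe_lt_coe]
        simpa using h2
      · exact Finset.le_sup' (f := fun μ => ‖μ‖₊) (by simpa [s] using hμ)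
  have hsr : spectralRadius ℂ A ≤ (r₀ : ℝ≥0∞) := by
    rw [spectralRadius]
    exact iSup₂_le fun μ hμ => by exact_mod_cast hr₀ μ hμ
  have hr01R : (r₀:ℝ) < 1 := by exact_mod_cast hr₀1
  set r : ℝ≥0 := (r₀ + 1)/2 with hrdef
  have hrR : (r:ℝ) = ((r₀:ℝ) + 1)/2 := by rw [hrdef]; push_cast; ring
  have hr₀r' : r₀ < r := by
    rw [← NNReal.coe_lt_coe, hrR]
    linarith
  have hr₀r : (r₀ : ℝ≥0∞) < (r : ℝ≥0∞) := by exact_mod_cast hr₀r'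
  have hr1 : (r : ℝ) < 1 := by
    rw [hrR]
    linarith
  have hrpos : (0:ℝ) < r := by rw [hrR]; positivity
  have hlim : ∀ᶠ k : ℕ in atTop, ((‖A ^ k‖₊ : ℝ≥0∞) ^ (1 / (k:ℝ))) < (r : ℝ≥0∞) :=
    eventually_lt_of_limsup_lt
      (lt_of_le_of_lt
        ((spectrum.limsup_pow_nnnorm_pow_one_div_le_spectralRadius A).trans hsr) hr₀r)
  obtain ⟨n₀, hn₀⟩ := eventually_atTop.mp hlim
  have hbig : ∀ k, max n₀ 1 ≤ k → ‖A ^ k‖ ≤ (r:ℝ)^k := by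
    intro k hk
    have h1 : 1 ≤ k := le_trans (le_max_right _ _) hk
    have hkne : (k:ℝ) ≠ 0 := by exact_mod_cast Nat.one_le_iff_ne_zero.mp h1
    have h := hn₀ k (le_trans (le_max_left _ _) hk)
    have h4 := ENNReal.rpow_le_rpow h.le (by positivity : (0:ℝ) ≤ (k:ℝ))
    rw [← ENNReal.rpow_mul, one_div, inv_mul_cancel₀ hkne, ENNReal.rpow_one,
      ENNReal.rpow_natCast] at h4
    have h3 : (‖A ^ k‖₊ : ℝ≥0) ≤ r ^ k := by exact_mod_cast h4
    exact_mod_cast h3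
  set C : ℝ := 1 + ∑ k ∈ Finset.range (max n₀ 1), ‖A ^ k‖ / (r:ℝ)^k with hC
  have hsum0 : 0 ≤ ∑ k ∈ Finset.range (max n₀ 1), ‖A ^ k‖ / (r:ℝ)^k :=
    Finset.sum_nonneg (fun i _ => by positivity)
  refine ⟨r, hr1, C, by rw [hC]; linarith, fun k => ?_⟩
  rcases lt_or_ge k (max n₀ 1) with hk | hk
  · have hle : ‖A ^ k‖ / (r:ℝ)^k ≤ C := by
      have := Finset.single_le_sum (f := fun k => ‖A ^ k‖ / (r:ℝ)^k)
        (fun i _ => by positivity) (Finset.mem_range.mpr hk)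
      rw [hC]; linarith
    calc ‖A ^ k‖ = (‖A ^ k‖ / (r:ℝ)^k) * (r:ℝ)^k := by field_simp
    _ ≤ C * (r:ℝ)^k := by gcongr
  · calc ‖A ^ k‖ ≤ (r:ℝ)^k := hbig k hk
    _ ≤ C * (r:ℝ)^k := le_mul_of_one_le_left (by positivity) (by rw [hC]; linarith)

lemma beur_eval_repr (hCA : ∀ k : ℕ, ‖A ^ k‖ ≤ CA * (rA:ℝ) ^ k)
    {f : ℂ → ℂ} {p : FormalMultilinearSeries ℂ ℂ ℂ} {R : ℝ≥0∞}
    (hp : HasFPowerSeriesOnBall f p 0 R) (hrad : (rA : ℝ≥0∞) < p.radius) :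
    Summable (fun k : ℕ => ‖p.coeff k • A ^ k‖) ∧
      matApply f A = ∑' k : ℕ, p.coeff k • A ^ k := by
  constructor
  · obtain ⟨s, hs1, hs2⟩ := ENNReal.lt_iff_exists_nnreal_btwn.mp hrad
    obtain ⟨Cp, hCp0, hCp⟩ := p.norm_mul_pow_le_of_lt_radius hs2
    have hs0 : (0:ℝ) < s := lt_of_le_of_lt (rA.coe_nonneg) (by exact_mod_cast hs1)
    have hrs : (rA:ℝ)/(s:ℝ) < 1 := (div_lt_one hs0).mpr (by exact_mod_cast hs1)
    have hCA0 : 0 ≤ CA := by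
      have h2 : (0:ℝ) ≤ CA * (rA:ℝ)^0 := le_trans (norm_nonneg _) (hCA 0)
      simpa using h2
    refine Summable.of_nonneg_of_le (fun k => norm_nonneg _) (fun k => ?_)
      (((summable_geometric_of_lt_one (by positivity) hrs).mul_left (Cp * CA)))
    rw [norm_smul]
    have h1 : ‖p.coeff k‖ ≤ Cp / (s:ℝ)^k := by
      rw [le_div_iff₀ (by positivity)]
      calc ‖p.coeff k‖ * (s:ℝ)^k = ‖p k‖ * (s:ℝ)^k := by
            rw [p.norm_apply_eq_norm_coef]
      _ ≤ Cp := hCp k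
    calc ‖p.coeff k‖ * ‖A ^ k‖ ≤ (Cp / (s:ℝ)^k) * (CA * (rA:ℝ)^k) := by
          apply mul_le_mul h1 (hCA k) (norm_nonneg _) (by positivity)
    _ = Cp * CA * ((rA:ℝ)/(s:ℝ))^k := by
          rw [div_pow]
          ring
  · exact tsum_congr (fun k => by
      rw [show (iteratedDeriv k f 0 / (Nat.factorial k : ℂ)) = taylorCoeff f k from rfl,
        beur_coeff_eq hp k])

lemma beur_matApply_const (A : Matrix (Fin d) (Fin d) ℂ) (c : ℂ) :
    matApply (fun _ => c) A = c • 1 := by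
  rw [matApply]
  rw [tsum_eq_single 0]
  · have h0 : taylorCoeff (fun _ => c) 0 = c := by
      rw [beur_coeff_eq (hasFPowerSeriesOnBall_const (c := c) (e := (0:ℂ)))]
      simp [FormalMultilinearSeries.coeff, constFormalMultilinearSeries]
    show taylorCoeff (fun _ => c) 0 • A ^ 0 = c • 1
    rw [h0, pow_zero]
  · intro b hb
    have hb0 : taylorCoeff (fun _ => c) b = 0 := by
      rw [beur_coeff_eq (hasFPowerSeriesOnBall_const (c := c) (e := (0:ℂ)))]
      simp [FormalMultilinearSeries.coeff, constFormalMultilinearSeries_apply_of_nonzero hb]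
    show taylorCoeff (fun _ => c) b • A ^ b = 0
    rw [hb0, zero_smul]

lemma beur_matApply_mul (hCA : ∀ k : ℕ, ‖A ^ k‖ ≤ CA * (rA:ℝ) ^ k) (hrA : (rA:ℝ) < 1)
    {f g : ℂ → ℂ} (hf : HinfOn f) (hg : HinfOn g) :
    matApply (fun z => f z * g z) A = matApply f A * matApply g A := by
  obtain ⟨hu0, hru, hu1⟩ := beur_nnreal_mid hrA
  set u : ℝ≥0 := (rA+1)/2 with hu
  have hp := beur_hinf_hasSeries hf hu0 hu1
  have hq := beur_hinf_hasSeries hg hu0 hu1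
  set p := cauchyPowerSeries f 0 (u:ℝ) with hpdef
  set q := cauchyPowerSeries g 0 (u:ℝ) with hqdef
  have hraE : (rA : ℝ≥0∞) < (u : ℝ≥0∞) := by
    rw [ENNReal.coe_lt_coe, ← NNReal.coe_lt_coe]; exact hru
  have hfg := beur_mul_series hu0 hp hq
  set P := FormalMultilinearSeries.ofScalars ℂ
      (fun n => ∑ k ∈ Finset.range (n+1), p.coeff k * q.coeff (n - k)) with hPdef
  have humin : min (u:ℝ≥0∞) 1 = (u:ℝ≥0∞) := by
    apply min_eq_left
    have : (u:ℝ≥0∞) < ((1:ℝ≥0):ℝ≥0∞) := by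
      rw [ENNReal.coe_lt_coe, ← NNReal.coe_lt_coe]; exact_mod_cast hu1
    simpa using this.le
  obtain ⟨hsf, hef⟩ := beur_eval_repr hCA hp (lt_of_lt_of_le hraE hp.r_le)
  obtain ⟨hsg, heg⟩ := beur_eval_repr hCA hq (lt_of_lt_of_le hraE hq.r_le)
  obtain ⟨hsfg, hefg⟩ := beur_eval_repr hCA hfg
    (lt_of_lt_of_le hraE (le_trans humin.ge hfg.r_le))
  rw [hefg, hef, heg]
  refine Eq.trans ?_ (tsum_mul_tsum_eq_tsum_sum_range_of_summable_norm hsf hsg).symm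
  refine tsum_congr fun n => ?_
  have hPc : P.coeff n = ∑ k ∈ Finset.range (n+1), p.coeff k * q.coeff (n-k) := by
    show P n (fun _ => (1:ℂ)) = _
    rw [hPdef, FormalMultilinearSeries.ofScalars_apply_eq]
    simp
  rw [hPc, Finset.sum_smul]
  refine Finset.sum_congr rfl fun k hk => ?_
  rw [Finset.mem_range, Nat.lt_succ_iff] at hk
  rw [smul_mul_smul_comm, ← pow_add, Nat.add_sub_cancel' hk]

lemma beur_matApply_add (hCA : ∀ k : ℕ, ‖A ^ k‖ ≤ CA * (rA:ℝ) ^ k) (hrA : (rA:ℝ) < 1)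
    {f g : ℂ → ℂ} (hf : HinfOn f) (hg : HinfOn g) :
    matApply (fun z => f z + g z) A = matApply f A + matApply g A := by
  obtain ⟨hu0, hru, hu1⟩ := beur_nnreal_mid hrA
  set u : ℝ≥0 := (rA+1)/2 with hu
  have hp := beur_hinf_hasSeries hf hu0 hu1
  have hq := beur_hinf_hasSeries hg hu0 hu1
  set p := cauchyPowerSeries f 0 (u:ℝ) with hpdef
  set q := cauchyPowerSeries g 0 (u:ℝ) with hqdef
  have hraE : (rA : ℝ≥0∞) < (u : ℝ≥0∞) := by
    rw [ENNReal.coe_lt_coe, ← NNReal.coe_lt_coe]; exact hru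
  have hpq : HasFPowerSeriesOnBall (fun z => f z + g z) (p + q) 0 u := hp.add hq
  obtain ⟨hsf, hef⟩ := beur_eval_repr hCA hp (lt_of_lt_of_le hraE hp.r_le)
  obtain ⟨hsg, heg⟩ := beur_eval_repr hCA hq (lt_of_lt_of_le hraE hq.r_le)
  obtain ⟨hsfg, hefg⟩ := beur_eval_repr hCA hpq (lt_of_lt_of_le hraE hpq.r_le)
  rw [hefg, hef, heg]
  have hco : ∀ n, (p+q).coeff n = p.coeff n + q.coeff n := fun n => rfl
  calc (∑' k : ℕ, (p+q).coeff k • A ^ k)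
      = ∑' k : ℕ, (p.coeff k • A ^ k + q.coeff k • A ^ k) := by
        refine tsum_congr fun k => ?_; rw [hco, add_smul]
  _ = (∑' k : ℕ, p.coeff k • A ^ k) + ∑' k : ℕ, q.coeff k • A ^ k :=
        Summable.tsum_add hsf.of_norm hsg.of_norm

lemma beur_matApply_sum {ι : Type*} (hCA : ∀ k : ℕ, ‖A ^ k‖ ≤ CA * (rA:ℝ) ^ k)
    (hrA : (rA:ℝ) < 1) (t : Finset ι) (ψ : ι → ℂ → ℂ) (h : ∀ k ∈ t, HinfOn (ψ k)) :
    matApply (fun z => ∑ k ∈ t, ψ k z) A = ∑ k ∈ t, matApply (ψ k) A := by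
  classical
  induction t using Finset.induction_on with
  | empty =>
    simpa using beur_matApply_const A 0
  | insert a s hx ih =>
    have h1 := h a (Finset.mem_insert_self a s)
    have h2 : ∀ k ∈ s, HinfOn (ψ k) := fun k hk => h k (Finset.mem_insert_of_mem hk)
    simp only [Finset.sum_insert hx]
    rw [beur_matApply_add hCA hrA h1 (beur_hinf_sum s ψ h2), ih h2]

end MatrixNorm

/-! ### Roots of unity -/

noncomputable def rootN (N : ℕ) : ℂ := Complex.exp (2 * Real.pi * Complex.I / N)

lemma rootN_ne_zero (N : ℕ) : rootN N ≠ 0 := Complex.exp_ne_zero _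

lemma rootN_pow_N {N : ℕ} (hN : 0 < N) : (rootN N) ^ N = 1 := by
  rw [rootN, ← Complex.exp_nat_mul]
  rw [mul_div_cancel₀ _ (by exact_mod_cast hN.ne' : (N:ℂ) ≠ 0)]
  simpa [mul_comm] using Complex.exp_two_pi_mul_I

lemma abs_rootN (N : ℕ) : ‖rootN N‖ = 1 := by
  have h : 2 * Real.pi * Complex.I / N = ((2 * Real.pi / N : ℝ) : ℂ) * Complex.I := by
    push_cast; ring
  rw [rootN, h, Complex.norm_exp_ofReal_mul_I]

lemma conj_rootN_pow (N m : ℕ) : conj ((rootN N) ^ m) = ((rootN N) ^ m)⁻¹ := by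
  rw [← Complex.inv_eq_conj]
  simp [abs_rootN]

lemma beur_ortho {N : ℕ} (hN : 0 < N) {i j : ℕ} (hi : i < N) (hj : j < N) :
    ∑ k ∈ Finset.range N, conj ((rootN N) ^ (i * k)) * (rootN N) ^ (k * j)
      = if i = j then (N:ℂ) else 0 := by
  set ω := rootN N with hω
  have hne : ω ≠ 0 := rootN_ne_zero N
  set q : ℂ := (ω ^ i)⁻¹ * ω ^ j with hq
  have hterm : ∀ k, conj (ω ^ (i * k)) * ω ^ (k * j) = q ^ k := by
    intro k
    rw [conj_rootN_pow, hq, mul_pow, inv_pow, ← pow_mul, ← pow_mul, mul_comm k j]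
  rw [Finset.sum_congr rfl (fun k _ => hterm k)]
  by_cases hij : i = j
  · subst hij
    have hq1 : q = 1 := by rw [hq, inv_mul_cancel₀ (pow_ne_zero _ hne)]
    simp [hq1]
  · rw [if_neg hij]
    have hqN : q ^ N = 1 := by
      rw [hq, mul_pow, inv_pow, ← pow_mul, ← pow_mul, mul_comm i N, mul_comm j N,
        pow_mul, pow_mul, rootN_pow_N hN, one_pow, one_pow, inv_one, one_mul]
    have hq1 : q ≠ 1 := by
      intro h
      apply hij
      have hprim := Complex.isPrimitiveRoot_exp N hN.ne'
      have hpow : ω ^ i = ω ^ j := by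
        rw [hq] at h
        field_simp at h
        exact h.symm
      exact hprim.pow_inj hi hj hpow
    rw [geom_sum_eq hq1, hqN, sub_self, zero_div]

lemma beur_parseval {N : ℕ} (hN : 0 < N) (a : ℕ → ℂ) :
    ∑ i ∈ Finset.range N, Complex.normSq (∑ k ∈ Finset.range N,
        ((N:ℂ)⁻¹ * conj ((rootN N) ^ (i * k))) * a k)
      = (N:ℝ)⁻¹ * ∑ k ∈ Finset.range N, Complex.normSq (a k) := by
  set ω := rootN N with hω
  set F : ℕ → ℂ := fun i => ∑ k ∈ Finset.range N, ((N:ℂ)⁻¹ * conj (ω ^ (i * k))) * a k with hF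
  have hNc : (N:ℂ) ≠ 0 := by exact_mod_cast hN.ne'
  have key : ∀ i, F i * conj (F i)
      = ∑ k ∈ Finset.range N, ∑ l ∈ Finset.range N,
          ((N:ℂ)⁻¹ * (N:ℂ)⁻¹ * (a k * conj (a l))) * (conj (ω ^ (k * i)) * ω ^ (i * l)) := by
    intro i
    rw [hF, map_sum, Finset.sum_mul_sum]
    refine Finset.sum_congr rfl fun k hk => Finset.sum_congr rfl fun l hl => ?_
    simp only [map_mul, map_inv₀, map_natCast, Complex.conj_conj]
    rw [Nat.mul_comm i k]
    ring
  have HC : ∑ i ∈ Finset.range N, F i * conj (F i)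
      = (N:ℂ)⁻¹ * ∑ k ∈ Finset.range N, a k * conj (a k) := by
    rw [Finset.sum_congr rfl (fun i _ => key i)]
    rw [Finset.sum_comm]
    have step : ∀ k ∈ Finset.range N,
        (∑ i ∈ Finset.range N, ∑ l ∈ Finset.range N,
          ((N:ℂ)⁻¹ * (N:ℂ)⁻¹ * (a k * conj (a l))) * (conj (ω ^ (k * i)) * ω ^ (i * l)))
        = (N:ℂ)⁻¹ * (a k * conj (a k)) := by
      intro k hk
      rw [Finset.mem_range] at hk
      rw [Finset.sum_comm]
      have inner : ∀ l ∈ Finset.range N,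
          (∑ i ∈ Finset.range N,
            ((N:ℂ)⁻¹ * (N:ℂ)⁻¹ * (a k * conj (a l))) * (conj (ω ^ (k * i)) * ω ^ (i * l)))
          = ((N:ℂ)⁻¹ * (N:ℂ)⁻¹ * (a k * conj (a l))) * (if k = l then (N:ℂ) else 0) := by
        intro l hl
        rw [Finset.mem_range] at hl
        rw [← Finset.mul_sum, beur_ortho hN hk hl]
      rw [Finset.sum_congr rfl inner]
      rw [Finset.sum_eq_single k]
      · rw [if_pos rfl]
        field_simp
      · intro l hl hlk
        rw [if_neg (fun h => hlk h.symm), mul_zero]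
      · intro hk'
        exact absurd (Finset.mem_range.mpr hk) hk'
    rw [Finset.sum_congr rfl step, ← Finset.mul_sum]
  have cast_eq : ((∑ i ∈ Finset.range N, Complex.normSq (F i) : ℝ) : ℂ)
      = (((N:ℝ)⁻¹ * ∑ k ∈ Finset.range N, Complex.normSq (a k) : ℝ) : ℂ) := by
    push_cast
    calc ((∑ i ∈ Finset.range N, (Complex.normSq (F i) : ℂ)))
        = ∑ i ∈ Finset.range N, F i * conj (F i) := by
          refine Finset.sum_congr rfl fun i _ => ?_
          rw [Complex.mul_conj]
    _ = (N:ℂ)⁻¹ * ∑ k ∈ Finset.range N, a k * conj (a k) := HC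
    _ = (N:ℂ)⁻¹ * ∑ k ∈ Finset.range N, (Complex.normSq (a k) : ℂ) := by
          rw [Finset.sum_congr rfl fun k _ => Complex.mul_conj (a k)]
  exact_mod_cast cast_eq

end BeurlingAux

open scoped ComplexConjugate

/-- Finite P. Beurling functions with bound `M² + ε`, where `M` is an interpolation
constant for the sequence of matrices. -/
theorem exists_finite_beurling_functions
    (d : ℕ → ℕ) (A : ∀ n : ℕ, Matrix (Fin (d n)) (Fin (d n)) ℂ)
    (hA : ∀ n, ∀ μ ∈ spectrum ℂ (A n), ‖μ‖ < 1)
    (M : ℝ) (hM : 0 < M)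
    (hInt : ∀ φ : ℕ → ℂ → ℂ, (∀ n, HinfOn (φ n)) →
        (∀ n, ∀ z ∈ Metric.ball (0 : ℂ) 1, ‖φ n z‖ ≤ 1) →
        ∃ ψ : ℂ → ℂ, HinfOn ψ ∧
          (∀ z ∈ Metric.ball (0 : ℂ) 1, ‖ψ z‖ ≤ M) ∧
          ∀ n, matApply ψ (A n) = matApply (φ n) (A n))
    (N : ℕ) (hN : 0 < N) (ε : ℝ) (hε : 0 < ε) :
    ∃ f : Fin N → ℂ → ℂ, (∀ i, HinfOn (f i)) ∧
      (∀ i j : Fin N, matApply (f i) (A j) =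
        if i = j then (1 : Matrix (Fin (d j)) (Fin (d j)) ℂ) else 0) ∧
      (∀ z ∈ Metric.ball (0 : ℂ) 1, ∑ j : Fin N, ‖f j z‖ ≤ M ^ 2 + ε) := by
  classical
  have hNc : (N:ℂ) ≠ 0 := by exact_mod_cast hN.ne'
  have hNr : (N:ℝ) ≠ 0 := by exact_mod_cast hN.ne'
  have habsω : ∀ m : ℕ, ‖(rootN N) ^ m‖ = 1 := fun m => by
    rw [norm_pow, abs_rootN, one_pow]
  -- interpolate each character
  have hint : ∀ k : ℕ, ∃ ψ : ℂ → ℂ, HinfOn ψ ∧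
      (∀ z ∈ Metric.ball (0:ℂ) 1, ‖ψ z‖ ≤ M) ∧
      ∀ n, matApply ψ (A n) = matApply (fun _ => (rootN N) ^ (k * n)) (A n) :=
    fun k => hInt (fun n => fun _ => (rootN N) ^ (k * n)) (fun n => beur_hinf_const _)
      (fun n z _ => le_of_eq (habsω _))
  choose ψ hψh hψb hψe using hint
  -- the averaged functions
  set Ψ : ℕ → ℕ → ℂ → ℂ :=
    fun i k => fun z => ((N:ℂ)⁻¹ * conj ((rootN N) ^ (i * k))) * ψ k z with hΨ
  set F : ℕ → ℂ → ℂ := fun i => fun z => ∑ k ∈ Finset.range N, Ψ i k z with hF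
  have hΨh : ∀ i k, HinfOn (Ψ i k) :=
    fun i k => beur_hinf_mul (beur_hinf_const _) (hψh k)
  have hFh : ∀ i, HinfOn (F i) := fun i => beur_hinf_sum (Finset.range N) (Ψ i) (fun k _ => hΨh i k)
  -- evaluation of F i on A j
  have hFA : ∀ i : ℕ, i < N → ∀ j : Fin N,
      matApply (F i) (A (j:ℕ)) = (if i = (j:ℕ) then (1:ℂ) else 0) • 1 := by
    intro i hi j
    obtain ⟨rA, hrA, CA, hCA0, hCA⟩ := beur_pow_decay (A (j:ℕ)) (hA (j:ℕ))
    have e1 : matApply (F i) (A (j:ℕ)) = ∑ k ∈ Finset.range N, matApply (Ψ i k) (A (j:ℕ)) :=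
      beur_matApply_sum hCA hrA (Finset.range N) (Ψ i) (fun k _ => hΨh i k)
    have e2 : ∀ k ∈ Finset.range N, matApply (Ψ i k) (A (j:ℕ))
        = ((((N:ℂ)⁻¹ * conj ((rootN N) ^ (i * k))) * (rootN N) ^ (k * (j:ℕ)))
            • (1 : Matrix (Fin (d (j:ℕ))) (Fin (d (j:ℕ))) ℂ)) := by
      intro k _
      have em : matApply (Ψ i k) (A (j:ℕ))
          = matApply (fun _ => ((N:ℂ)⁻¹ * conj ((rootN N) ^ (i * k)))) (A (j:ℕ))
            * matApply (ψ k) (A (j:ℕ)) :=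
        beur_matApply_mul hCA hrA (beur_hinf_const _) (hψh k)
      rw [em, beur_matApply_const, hψe k (j:ℕ), beur_matApply_const,
        smul_mul_smul_comm, one_mul]
    calc matApply (F i) (A (j:ℕ))
        = ∑ k ∈ Finset.range N, matApply (Ψ i k) (A (j:ℕ)) := e1
    _ = ∑ k ∈ Finset.range N, ((((N:ℂ)⁻¹ * conj ((rootN N) ^ (i * k)))
          * (rootN N) ^ (k * (j:ℕ))) • (1 : Matrix (Fin (d (j:ℕ))) (Fin (d (j:ℕ))) ℂ)) :=
        Finset.sum_congr rfl e2
    _ = (∑ k ∈ Finset.range N, (((N:ℂ)⁻¹ * conj ((rootN N) ^ (i * k)))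
          * (rootN N) ^ (k * (j:ℕ)))) • 1 := (Finset.sum_smul).symm
    _ = (if i = (j:ℕ) then (1:ℂ) else 0) • 1 := by
        have hout : ∑ k ∈ Finset.range N, (((N:ℂ)⁻¹ * conj ((rootN N) ^ (i * k)))
            * (rootN N) ^ (k * (j:ℕ)))
            = (N:ℂ)⁻¹ * ∑ k ∈ Finset.range N, conj ((rootN N) ^ (i * k))
                * (rootN N) ^ (k * (j:ℕ)) := by
          rw [Finset.mul_sum]
          exact Finset.sum_congr rfl fun k _ => by ring
        rw [hout, beur_ortho hN hi j.isLt]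
        by_cases h : i = (j:ℕ)
        · rw [if_pos h, if_pos h, inv_mul_cancel₀ hNc]
        · rw [if_neg h, if_neg h, mul_zero]
  -- the final functions
  refine ⟨fun i => fun z => F (i:ℕ) z * F (i:ℕ) z, ?_, ?_, ?_⟩
  · exact fun i => beur_hinf_mul (hFh (i:ℕ)) (hFh (i:ℕ))
  · intro i j
    obtain ⟨rA, hrA, CA, hCA0, hCA⟩ := beur_pow_decay (A (j:ℕ)) (hA (j:ℕ))
    have em : matApply (fun z => F (i:ℕ) z * F (i:ℕ) z) (A (j:ℕ))
        = matApply (F (i:ℕ)) (A (j:ℕ)) * matApply (F (i:ℕ)) (A (j:ℕ)) :=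
      beur_matApply_mul hCA hrA (hFh (i:ℕ)) (hFh (i:ℕ))
    rw [em, hFA (i:ℕ) i.isLt j, smul_mul_smul_comm, one_mul]
    by_cases h : i = j
    · have hv : (i:ℕ) = (j:ℕ) := by rw [h]
      rw [if_pos hv, if_pos h, mul_one, one_smul]
    · have hv : ¬ (i:ℕ) = (j:ℕ) := fun hc => h (Fin.ext hc)
      rw [if_neg hv, if_neg h, mul_zero, zero_smul]
  · intro z hz
    have step1 : ∀ j : Fin N, ‖F (j:ℕ) z * F (j:ℕ) z‖
        = Complex.normSq (F (j:ℕ) z) := by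
      intro j
      rw [norm_mul, Complex.normSq_eq_norm_sq, sq]
    calc ∑ j : Fin N, ‖F (j:ℕ) z * F (j:ℕ) z‖
        = ∑ j : Fin N, Complex.normSq (F (j:ℕ) z) :=
          Finset.sum_congr rfl fun j _ => step1 j
    _ = ∑ i ∈ Finset.range N, Complex.normSq (F i z) :=
          Fin.sum_univ_eq_sum_range (fun i => Complex.normSq (F i z)) N
    _ = (N:ℝ)⁻¹ * ∑ k ∈ Finset.range N, Complex.normSq (ψ k z) :=
          beur_parseval hN (fun k => ψ k z)
    _ ≤ (N:ℝ)⁻¹ * ((N:ℝ) * M^2) := by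
          have hterm : ∀ k ∈ Finset.range N, Complex.normSq (ψ k z) ≤ M^2 := by
            intro k _
            rw [Complex.normSq_eq_norm_sq]
            exact pow_le_pow_left₀ (norm_nonneg _) (hψb k z hz) 2
          have hsum : ∑ k ∈ Finset.range N, Complex.normSq (ψ k z) ≤ (N:ℝ) * M^2 := by
            calc ∑ k ∈ Finset.range N, Complex.normSq (ψ k z)
                ≤ ∑ _k ∈ Finset.range N, M^2 := Finset.sum_le_sum hterm
            _ = (N:ℝ) * M^2 := by rw [Finset.sum_const, Finset.card_range, nsmul_eq_mul]
          exact mul_le_mul_of_nonneg_left hsum (by positivity)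
    _ = M^2 := by field_simp
    _ ≤ M^2 + ε := by linarith
end

section
/- Let K be a closed subspace of a complex Hilbert space H and let x ∈ H with x ∉ K. Then 1/dist(x, K) = inf{ ‖y‖ : y ∈ K^⊥ and ⟨y, x⟩ = 1 }. -/
/-- For a closed subspace `K` of a complex Hilbert space and `x ∉ K`, the reciprocal of the
distance from `x` to `K` equals the infimum of norms of `y ∈ K^⊥` with `⟨y, x⟩ = 1`. -/
theorem one_div_dist_eq_inf_norm
    {H : Type*} [NormedAddCommGroup H] [InnerProductSpace ℂ H] [CompleteSpace H]
    (K : Submodule ℂ H) (hK : IsClosed (K : Set H))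
    (x : H) (hx : x ∉ K) :
    1 / Metric.infDist x (K : Set H) =
      sInf {r : ℝ | ∃ y ∈ Kᗮ, (inner ℂ y x : ℂ) = 1 ∧ ‖y‖ = r} := by
  haveI : CompleteSpace K := hK.completeSpace_coe
  set w : H := x - K.orthogonalProjectionOnto x with hw_def
  have hw : w ∈ Kᗮ := K.sub_starProjection_mem_orthogonal x
  have hwne : w ≠ 0 := by
    intro h
    apply hx
    have : x = (K.orthogonalProjectionOnto x : H) := by
      have := sub_eq_zero.mp h; exact this
    rw [this]; exact (K.orthogonalProjectionOnto x).2
  have hwpos : (0:ℝ) < ‖w‖ := norm_pos_iff.mpr hwne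
  have hd : Metric.infDist x (K : Set H) = ‖w‖ := by
    rw [Metric.infDist_eq_iInf, hw_def, ← Submodule.starProjection_apply, Submodule.starProjection_minimal]
    simp [dist_eq_norm]
  -- inner ℂ w x = ‖w‖²
  have hinner_wx : (inner ℂ w x : ℂ) = (‖w‖^2 : ℝ) := by
    have : (inner ℂ w x : ℂ) = inner ℂ w w + inner ℂ w (K.orthogonalProjectionOnto x : H) := by
      rw [← inner_add_right]; congr 1; simp [hw_def]
    rw [this, (Submodule.mem_orthogonal' _ _).mp hw _ (K.orthogonalProjectionOnto x).2,
      add_zero, inner_self_eq_norm_sq_to_K]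
    norm_num
  set S : Set ℝ := {r : ℝ | ∃ y ∈ Kᗮ, (inner ℂ y x : ℂ) = 1 ∧ ‖y‖ = r}
  have hmem : (1 / ‖w‖) ∈ S := by
    refine ⟨((‖w‖^2 : ℝ) : ℂ)⁻¹ • w, Kᗮ.smul_mem _ hw, ?_, ?_⟩
    · rw [inner_smul_left, hinner_wx]
      have : ((‖w‖^2 : ℝ) : ℂ) ≠ 0 := by
        simp [pow_eq_zero_iff, hwne]
      simp only [map_inv₀, Complex.conj_ofReal]
      exact inv_mul_cancel₀ this
    · rw [norm_smul]
      simp [abs_of_nonneg (sq_nonneg ‖w‖)]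
      rw [sq]
      field_simp
  have hlb : ∀ r ∈ S, 1 / ‖w‖ ≤ r := by
    rintro r ⟨y, hy, hyx, rfl⟩
    have h1 : (inner ℂ y x : ℂ) = inner ℂ y w := by
      have : (inner ℂ y w : ℂ) = inner ℂ y x - inner ℂ y (K.orthogonalProjectionOnto x : H) := by
        rw [← inner_sub_right]
      rw [this, (Submodule.mem_orthogonal' _ _).mp hy _ (K.orthogonalProjectionOnto x).2, sub_zero]
    have h2 : (1:ℝ) ≤ ‖y‖ * ‖w‖ := by
      calc (1:ℝ) = ‖(inner ℂ y w : ℂ)‖ := by rw [← h1, hyx]; simp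
        _ ≤ ‖y‖ * ‖w‖ := norm_inner_le_norm y w
    rw [div_le_iff₀ hwpos] at *
    linarith
  rw [hd]
  exact le_antisymm (le_csInf ⟨_, hmem⟩ hlb) (csInf_le ⟨1/‖w‖, hlb⟩ hmem)
end
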